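/- arXiv:2312.13014 — 3 statements merged into one kernel-verified Lean document; each statement's English description precedes it below -/
import Mathlib

section
/- Let G be a linearly ordered abelian group and let A be a G-graded k-algebra which is a domain and a finitely generated module over its center Z. Then for every φ ∈ Oz(A) there is a nonzero homogeneous normal element a ∈ A with a·φ(x) = x·a for all x ∈ A. In particular, if A is a ℤ^n-graded domain that is a finite module over its center, then every automorphism in Oz(A) is a graded automorphism (it maps each homogeneous component of A into itself). -/
noncomputable section

/-- The **ozone group** of a `k`-algebra `A`: the group of `k`-algebra automorphisms
of `A` that fix the center of `A` pointwise. -/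
def ozoneGroup (k A : Type*) [CommSemiring k] [Semiring A] [Algebra k A] :
    Subgroup (A ≃ₐ[k] A) where
  carrier := {σ | ∀ z ∈ Subalgebra.center k A, σ z = z}
  one_mem' := fun _ _ => rfl
  mul_mem' := by
    intro σ τ hσ hτ z hz
    show σ (τ z) = z
    rw [hτ z hz, hσ z hz]
  inv_mem' := by
    intro σ hσ z hz
    show σ.symm z = z
    conv_lhs => rw [← hσ z hz]
    exact σ.symm_apply_apply z

/-- An element `a` of a ring is **normal** if `a·A = A·a`. -/
def IsNormal {A : Type*} [Mul A] (a : A) : Prop :=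
  Set.range (fun x => a * x) = Set.range (fun x => x * a)

set_option linter.unusedSectionVars false
set_option linter.unnecessarySimpa false

open TensorProduct

namespace OzoneAux

section Simplicity
variable {F B : Type*} [Field F] [DivisionRing B] [Algebra F B]

def J (x : B ⊗[F] Bᵐᵒᵖ) : Submodule F (B ⊗[F] Bᵐᵒᵖ) :=
  Submodule.span F {y | ∃ p q, y = p * x * q}

lemma self_mem_J (x : B ⊗[F] Bᵐᵒᵖ) : x ∈ J x :=
  Submodule.subset_span ⟨1, 1, by simp⟩

lemma mul_mem_J {x y : B ⊗[F] Bᵐᵒᵖ} (hy : y ∈ J x) (p q : B ⊗[F] Bᵐᵒᵖ) :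
    p * y * q ∈ J x := by
  induction hy using Submodule.span_induction with
  | mem y hy =>
      obtain ⟨p', q', rfl⟩ := hy
      exact Submodule.subset_span ⟨p * p', q' * q, by noncomm_ring⟩
  | zero => simpa using (J x).zero_mem
  | add a b _ _ ha hb => simpa [mul_add, add_mul] using (J x).add_mem ha hb
  | smul f a _ ha => simpa [mul_smul_comm, smul_mul_assoc] using (J x).smul_mem f ha

lemma J_mono {x z : B ⊗[F] Bᵐᵒᵖ} (hz : z ∈ J x) : J z ≤ J x := by
  rw [J, Submodule.span_le]
  rintro y ⟨p, q, rfl⟩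
  exact mul_mem_J hz p q

variable (κ : Type*) [DecidableEq κ] (β : Module.Basis κ F Bᵐᵒᵖ)

def coords : B ⊗[F] Bᵐᵒᵖ ≃ₗ[F] (κ →₀ B) :=
  (TensorProduct.congr (LinearEquiv.refl F B) β.repr).trans
    (TensorProduct.finsuppScalarRight F F B κ)

lemma coords_tmul (b : B) (c : Bᵐᵒᵖ) (i : κ) :
    coords κ β (b ⊗ₜ c) i = β.repr c i • b := by
  simp [coords]

lemma coords_mul_left (p : B) (x : B ⊗[F] Bᵐᵒᵖ) (i : κ) :
    coords κ β ((p ⊗ₜ (1 : Bᵐᵒᵖ)) * x) i = p * coords κ β x i := by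
  induction x using TensorProduct.induction_on with
  | zero => simp
  | tmul b c => simp [coords_tmul, mul_smul_comm]
  | add a b ha hb => simp [mul_add, ha, hb]

lemma coords_mul_right (q : B) (x : B ⊗[F] Bᵐᵒᵖ) (i : κ) :
    coords κ β (x * (q ⊗ₜ (1 : Bᵐᵒᵖ))) i = coords κ β x i * q := by
  induction x using TensorProduct.induction_on with
  | zero => simp
  | tmul b c => simp [coords_tmul, smul_mul_assoc]
  | add a b ha hb => simp [add_mul, ha, hb]

lemma eq_one_tmul (x : B ⊗[F] Bᵐᵒᵖ) (f : κ → F)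
    (h : ∀ i, coords κ β x i = algebraMap F B (f i)) :
    x = (1 : B) ⊗ₜ (∑ i ∈ (coords κ β x).support, f i • β i) := by
  apply (coords κ β).injective
  ext j
  rw [coords_tmul, map_sum]
  simp only [map_smul, Module.Basis.repr_self]
  rw [Finsupp.finset_sum_apply]
  simp only [Finsupp.smul_apply, Finsupp.single_apply, smul_eq_mul, mul_ite, mul_one, mul_zero]
  rw [Finset.sum_ite_eq' (coords κ β x).support j f]
  by_cases hj : j ∈ (coords κ β x).support
  · rw [if_pos hj, h j, Algebra.algebraMap_eq_smul_one]
  · rw [if_neg hj, zero_smul]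
    exact (Finsupp.notMem_support_iff).mp hj

/-- Key simplicity lemma for `B ⊗[F] Bᵐᵒᵖ`, `B` a division algebra with center `F`. -/
lemma one_mem_J (hc : ∀ b : B, (∀ x : B, x * b = b * x) → ∃ f : F, algebraMap F B f = b) :
    ∀ (n : ℕ) (x : B ⊗[F] Bᵐᵒᵖ), x ≠ 0 → ((coords κ β x).support.card ≤ n) →
      (1 : B ⊗[F] Bᵐᵒᵖ) ∈ J x := by
  intro n
  induction n with
  | zero =>
      intro x hx hcard
      exfalso
      apply hx
      apply (coords κ β).injective
      simpa using Finsupp.card_support_eq_zero.mp (Nat.le_zero.mp hcard)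
  | succ n ih =>
      intro x hx hcard
      have hΦx : coords κ β x ≠ 0 := fun h => hx ((coords κ β).map_eq_zero_iff.mp h)
      obtain ⟨i₀, hi₀⟩ := Finsupp.support_nonempty_iff.mpr hΦx
      set b₀ : B := coords κ β x i₀ with hb₀def
      have hb₀ : b₀ ≠ 0 := Finsupp.mem_support_iff.mp hi₀
      set y : B ⊗[F] Bᵐᵒᵖ := (b₀⁻¹ ⊗ₜ (1 : Bᵐᵒᵖ)) * x with hydef
      have hyc : ∀ i, coords κ β y i = b₀⁻¹ * coords κ β x i := fun i =>
        coords_mul_left κ β b₀⁻¹ x i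
      have hyi₀ : coords κ β y i₀ = 1 := by rw [hyc, ← hb₀def, inv_mul_cancel₀ hb₀]
      have hysupp : (coords κ β y).support = (coords κ β x).support := by
        ext i
        simp only [Finsupp.mem_support_iff, hyc]
        constructor
        · intro h h'; apply h; rw [h', mul_zero]
        · intro h h'; exact h (by
            have := congrArg (fun t => b₀ * t) h'
            simpa [← mul_assoc, mul_inv_cancel₀ hb₀] using this)
      have hyJ : y ∈ J x := by
        have := mul_mem_J (self_mem_J x) (b₀⁻¹ ⊗ₜ (1 : Bᵐᵒᵖ)) 1
        simpa using this
      by_cases hcase : ∀ b : B, (b ⊗ₜ (1 : Bᵐᵒᵖ)) * y = y * (b ⊗ₜ (1 : Bᵐᵒᵖ))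
      · -- all coordinates of `y` are central
        have hcb : ∀ i, ∀ b : B, b * coords κ β y i = coords κ β y i * b := by
          intro i b
          have := congrArg (fun t => coords κ β t i) (hcase b)
          simpa [coords_mul_left, coords_mul_right] using this
        choose f hf using fun i => hc (coords κ β y i) (fun b => hcb i b)
        have hyone : y = (1 : B) ⊗ₜ (∑ i ∈ (coords κ β y).support, f i • β i) :=
          eq_one_tmul κ β y f (fun i => (hf i).symm)
        set c : Bᵐᵒᵖ := ∑ i ∈ (coords κ β y).support, f i • β i with hcdef
        have hcne : c ≠ 0 := by
          intro h
          have h1 : coords κ β y i₀ = algebraMap F B (f i₀) := (hf i₀).symm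
          rw [hyi₀] at h1
          have : β.repr c i₀ = f i₀ := by
            rw [hcdef, map_sum]
            simp only [map_smul, Module.Basis.repr_self]
            rw [Finsupp.finset_sum_apply]
            simp only [Finsupp.smul_apply, Finsupp.single_apply, smul_eq_mul, mul_ite, mul_one,
              mul_zero]
            rw [Finset.sum_ite_eq' _ i₀ f, if_pos (by rwa [hysupp])]
          rw [h] at this
          simp only [map_zero, Finsupp.coe_zero, Pi.zero_apply] at this
          rw [← this] at h1
          simp at h1
        have hone : (1 : B ⊗[F] Bᵐᵒᵖ) = ((1 : B) ⊗ₜ c⁻¹) * y := by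
          rw [hyone, Algebra.TensorProduct.tmul_mul_tmul, one_mul,
            inv_mul_cancel₀ hcne, Algebra.TensorProduct.one_def]
        rw [hone]
        simpa using mul_mem_J hyJ ((1 : B) ⊗ₜ c⁻¹) 1
      · push_neg at hcase
        obtain ⟨b, hb⟩ := hcase
        set z : B ⊗[F] Bᵐᵒᵖ := (b ⊗ₜ (1 : Bᵐᵒᵖ)) * y - y * (b ⊗ₜ (1 : Bᵐᵒᵖ)) with hzdef
        have hzne : z ≠ 0 := sub_ne_zero.mpr hb
        have hzc : ∀ i, coords κ β z i =
            b * coords κ β y i - coords κ β y i * b := by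
          intro i
          rw [hzdef, map_sub, Finsupp.sub_apply, coords_mul_left, coords_mul_right]
        have hzi₀ : coords κ β z i₀ = 0 := by rw [hzc, hyi₀, mul_one, one_mul, sub_self]
        have hzsupp : (coords κ β z).support ⊆ (coords κ β x).support.erase i₀ := by
          intro i hi
          rw [Finset.mem_erase]
          constructor
          · rintro rfl
            exact Finsupp.mem_support_iff.mp hi hzi₀
          · rw [← hysupp]
            rw [Finsupp.mem_support_iff] at hi ⊢
            intro h
            apply hi
            rw [hzc, h, mul_zero, zero_mul, sub_self]
        have hzcard : (coords κ β z).support.card ≤ n := by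
          calc (coords κ β z).support.card ≤ ((coords κ β x).support.erase i₀).card :=
                Finset.card_le_card hzsupp
            _ = (coords κ β x).support.card - 1 := Finset.card_erase_of_mem hi₀
            _ ≤ n := by omega
        have hzJ : z ∈ J x := by
          apply Submodule.sub_mem
          · simpa using mul_mem_J hyJ (b ⊗ₜ (1 : Bᵐᵒᵖ)) 1
          · simpa using mul_mem_J hyJ 1 (b ⊗ₜ (1 : Bᵐᵒᵖ))
        exact J_mono hzJ (ih z hzne hzcard)

end Simplicity

section ModuleTheory
variable {C : Type*} [Ring C]

theorem simple_iso_atom {M : Type*} [AddCommGroup M] [Module C M] [IsSimpleModule C M]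
    (hs : ∀ x : C, x ≠ 0 → ∃ (n : ℕ) (p q : Fin n → C), ∑ i, p i * x * q i = 1)
    (T : Submodule C C) (hT : IsAtom T) : Nonempty (T ≃ₗ[C] M) := by
  haveI : IsSimpleModule C T := isSimpleModule_iff_isAtom.mpr hT
  obtain ⟨t, htT, ht0⟩ := (Submodule.ne_bot_iff T).mp hT.1
  obtain ⟨n, p, q, hpq⟩ := hs t ht0
  haveI : Nontrivial M := IsSimpleModule.nontrivial C M
  obtain ⟨m, hm⟩ := exists_ne (0 : M)
  -- the maps T → M, x ↦ (x * q i) • m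
  let g : Fin n → (T →ₗ[C] M) := fun i =>
    { toFun := fun x => ((x : C) * q i) • m
      map_add' := by intro x y; simp [add_mul, add_smul]
      map_smul' := by
        intro c x
        simp only [Submodule.coe_smul, smul_eq_mul, RingHom.id_apply]
        rw [mul_assoc, mul_smul] }
  have hsum : ∑ i, g i ⟨p i • t, T.smul_mem (p i) htT⟩ = m := by
    have : ∀ i, g i ⟨p i • t, T.smul_mem (p i) htT⟩ = (p i * t * q i) • m := by
      intro i; simp [g, smul_eq_mul]
    rw [Finset.sum_congr rfl (fun i _ => this i), ← Finset.sum_smul, hpq, one_smul]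
  have : ∃ i, g i ⟨p i • t, T.smul_mem (p i) htT⟩ ≠ 0 := by
    by_contra h
    push_neg at h
    rw [Finset.sum_congr rfl (fun i _ => h i), Finset.sum_const_zero] at hsum
    exact hm hsum.symm
  obtain ⟨i, hi⟩ := this
  have hinj : Function.Injective (g i) := by
    rw [← LinearMap.ker_eq_bot]
    rcases eq_bot_or_eq_top (LinearMap.ker (g i)) with h | h
    · exact h
    · exfalso
      apply hi
      have : (⟨p i • t, T.smul_mem (p i) htT⟩ : T) ∈ LinearMap.ker (g i) := by
        rw [h]; trivial
      exact this
  have hsurj : Function.Surjective (g i) := by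
    rw [← LinearMap.range_eq_top]
    rcases eq_bot_or_eq_top (LinearMap.range (g i)) with h | h
    · exfalso
      apply hi
      have : g i ⟨p i • t, T.smul_mem (p i) htT⟩ ∈ LinearMap.range (g i) :=
        LinearMap.mem_range_self _ _
      rw [h] at this
      simpa using this
    · exact h
  exact ⟨LinearEquiv.ofBijective (g i) ⟨hinj, hsurj⟩⟩

theorem simple_iso {M N : Type*} [AddCommGroup M] [Module C M] [IsSimpleModule C M]
    [AddCommGroup N] [Module C N] [IsSimpleModule C N] [IsArtinian C C]
    (hs : ∀ x : C, x ≠ 0 → ∃ (n : ℕ) (p q : Fin n → C), ∑ i, p i * x * q i = 1) :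
    Nonempty (M ≃ₗ[C] N) := by
  haveI : Nontrivial M := IsSimpleModule.nontrivial C M
  haveI : Nontrivial C := by
    by_contra h
    rw [not_nontrivial_iff_subsingleton] at h
    obtain ⟨m, hm⟩ := exists_ne (0 : M)
    apply hm
    calc m = (1 : C) • m := (one_smul C m).symm
      _ = (0 : C) • m := by rw [Subsingleton.elim (1 : C) (0 : C)]
      _ = 0 := zero_smul C m
  have hbot : (⊤ : Submodule C C) ≠ ⊥ := by
    intro h
    have : (1 : C) ∈ (⊥ : Submodule C C) := h ▸ Submodule.mem_top
    simp only [Submodule.mem_bot] at this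
    exact one_ne_zero this
  rcases (IsAtomic.eq_bot_or_exists_atom_le (⊤ : Submodule C C)) with h | ⟨T, hT, _⟩
  · exact absurd h hbot
  · obtain ⟨e₁⟩ := simple_iso_atom (M := M) hs T hT
    obtain ⟨e₂⟩ := simple_iso_atom (M := N) hs T hT
    exact ⟨e₁.symm.trans e₂⟩

end ModuleTheory

section SN

/-- Type synonym of `B` carrying the `ψ`-twisted bimodule structure. -/
def Tw (B : Type*) : Type _ := B

/-- Reinterpret an element of `Tw B` as an element of `B`. -/
def Tw.out {B : Type*} (x : Tw B) : B := x

/-- Reinterpret an element of `B` as an element of `Tw B`. -/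
def Tw.mk {B : Type*} (x : B) : Tw B := x

lemma Tw.out_injective {B : Type*} : Function.Injective (Tw.out (B := B)) := fun _ _ h => h

instance {B : Type*} [AddCommGroup B] : AddCommGroup (Tw B) :=
  inferInstanceAs (AddCommGroup B)

set_option synthInstance.maxHeartbeats 1000000 in
set_option maxHeartbeats 2000000 in
/-- Skolem–Noether for finite-dimensional central division algebras. -/
theorem skolemNoether {F B : Type*} [Field F] [Ring B] [IsDomain B] [Algebra F B]
    [FiniteDimensional F B]
    (hc : ∀ b : B, (∀ x : B, x * b = b * x) → ∃ f : F, algebraMap F B f = b)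
    (ψ : B ≃ₐ[F] B) : ∃ u : B, u ≠ 0 ∧ ∀ x : B, u * ψ x = x * u := by
  classical
  letI : DivisionRing B := divisionRingOfFiniteDimensional F B
  -- untwisted module structure on B
  letI m1 : Module (B ⊗[F] Bᵐᵒᵖ) B := TensorProduct.Algebra.module
  have sm1 : ∀ (b : B) (c : Bᵐᵒᵖ) (x : B), (b ⊗ₜ[F] c) • x = b * (x * c.unop) := by
    intro b c x; rfl
  -- twisted module structure on Tw B
  letI : Module Bᵐᵒᵖ (Tw B) := inferInstanceAs (Module Bᵐᵒᵖ B)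
  letI : Module F (Tw B) := inferInstanceAs (Module F B)
  letI : Module B (Tw B) := Module.compHom B (ψ : B ≃+* B).toRingHom
  haveI : SMulCommClass B Bᵐᵒᵖ (Tw B) := by
    constructor
    intro a c x
    apply Tw.out_injective
    show ψ a * (Tw.out x * c.unop) = (ψ a * Tw.out x) * c.unop
    rw [mul_assoc]
  haveI : IsScalarTower F B (Tw B) := by
    constructor
    intro f b x
    apply Tw.out_injective
    show ψ (f • b) * Tw.out x = f • (ψ b * Tw.out x)
    rw [map_smul, smul_mul_assoc]
  haveI : IsScalarTower F Bᵐᵒᵖ (Tw B) := inferInstanceAs (IsScalarTower F Bᵐᵒᵖ B)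
  letI m2 : Module (B ⊗[F] Bᵐᵒᵖ) (Tw B) := TensorProduct.Algebra.module
  have sm2 : ∀ (b : B) (c : Bᵐᵒᵖ) (x : Tw B),
      Tw.out ((b ⊗ₜ[F] c) • x) = ψ b * (Tw.out x * c.unop) := by
    intro b c x; rfl
  haveI : Nontrivial (Tw B) := inferInstanceAs (Nontrivial B)
  -- simplicity of both modules
  haveI hs1 : IsSimpleModule (B ⊗[F] Bᵐᵒᵖ) B := by
    refine IsSimpleModule.mk (toIsSimpleOrder := ⟨fun P => ?_⟩)
    rcases eq_or_ne P ⊥ with h | h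
    · exact Or.inl h
    · refine Or.inr (eq_top_iff.mpr fun y _ => ?_)
      obtain ⟨x, hxP, hx0⟩ := (Submodule.ne_bot_iff P).mp h
      have : ((y * x⁻¹) ⊗ₜ[F] (1 : Bᵐᵒᵖ)) • x = y := by
        rw [sm1]
        simp [mul_assoc, inv_mul_cancel₀ hx0]
      exact this ▸ P.smul_mem _ hxP
  haveI hs2 : IsSimpleModule (B ⊗[F] Bᵐᵒᵖ) (Tw B) := by
    refine IsSimpleModule.mk (toIsSimpleOrder := ⟨fun P => ?_⟩)
    rcases eq_or_ne P ⊥ with h | h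
    · exact Or.inl h
    · refine Or.inr (eq_top_iff.mpr fun y _ => ?_)
      obtain ⟨x, hxP, hx0⟩ := (Submodule.ne_bot_iff P).mp h
      have hx0' : Tw.out x ≠ 0 := fun hh => hx0 (Tw.out_injective hh)
      have : ((ψ.symm (Tw.out y * (Tw.out x)⁻¹)) ⊗ₜ[F] (1 : Bᵐᵒᵖ)) • x = y := by
        apply Tw.out_injective
        rw [sm2]
        simp only [MulOpposite.unop_one, mul_one, AlgEquiv.apply_symm_apply]
        rw [mul_assoc, inv_mul_cancel₀ hx0', mul_one]
      exact this ▸ P.smul_mem _ hxP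
  -- Artinian
  haveI : IsArtinian F (B ⊗[F] Bᵐᵒᵖ) := inferInstance
  haveI : IsArtinian (B ⊗[F] Bᵐᵒᵖ) (B ⊗[F] Bᵐᵒᵖ) := isArtinian_of_tower F inferInstance
  -- simplicity of C in the Σ p x q = 1 form
  have hs : ∀ x : B ⊗[F] Bᵐᵒᵖ, x ≠ 0 →
      ∃ (n : ℕ) (p q : Fin n → B ⊗[F] Bᵐᵒᵖ), ∑ i, p i * x * q i = 1 := by
    intro x hx
    set β := Module.Basis.ofVectorSpace F Bᵐᵒᵖ
    have h0 := one_mem_J _ β hc ((coords _ β x).support.card) x hx le_rfl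
    have h1 : (1 : B ⊗[F] Bᵐᵒᵖ) ∈ Submodule.span F {y | ∃ p q, y = p * x * q} := h0
    rw [Submodule.mem_span_set'] at h1
    obtain ⟨n, f, g, hfg⟩ := h1
    have : ∀ i : Fin n, ∃ p q : B ⊗[F] Bᵐᵒᵖ, (g i : B ⊗[F] Bᵐᵒᵖ) = p * x * q :=
      fun i => (g i).2
    choose p q hpq using this
    refine ⟨n, fun i => f i • p i, q, ?_⟩
    rw [← hfg]
    apply Finset.sum_congr rfl
    intro i _
    rw [hpq i, smul_mul_assoc, smul_mul_assoc]
  -- the isomorphism of the two simple modules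
  obtain ⟨e⟩ := simple_iso (C := B ⊗[F] Bᵐᵒᵖ) (M := B) (N := Tw B) hs
  set u : B := Tw.out (e 1) with hudef
  have key : ∀ (b : B) (c : Bᵐᵒᵖ) (x : B),
      Tw.out (e (b * (x * c.unop))) = ψ b * (Tw.out (e x) * c.unop) := by
    intro b c x
    have h1 : e ((b ⊗ₜ[F] c) • x) = (b ⊗ₜ[F] c) • (e x) := e.map_smul _ _
    rw [sm1] at h1
    rw [h1, sm2]
  have hev : ∀ v : B, Tw.out (e v) = u * v := by
    intro v
    have := key 1 (MulOpposite.op v) 1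
    simpa [hudef] using this
  have heb : ∀ b : B, Tw.out (e b) = ψ b * u := by
    intro b
    have := key b 1 1
    simpa [hudef] using this
  have hu : ∀ b : B, u * b = ψ b * u := fun b => (hev b).symm.trans (heb b)
  have hu0 : u ≠ 0 := by
    intro h
    have h1 : Tw.out (e 1) = Tw.out (e 0) := by
      rw [map_zero, hev 1, h, zero_mul]; rfl
    exact one_ne_zero (e.injective (Tw.out_injective h1))
  refine ⟨u⁻¹, inv_ne_zero hu0, fun x => ?_⟩
  have hx := hu x
  calc u⁻¹ * ψ x = u⁻¹ * ψ x * 1 := (mul_one _).symm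
    _ = u⁻¹ * ψ x * (u * u⁻¹) := by rw [mul_inv_cancel₀ hu0]
    _ = u⁻¹ * (ψ x * u) * u⁻¹ := by noncomm_ring
    _ = u⁻¹ * (u * x) * u⁻¹ := by rw [← hx]
    _ = (u⁻¹ * u) * (x * u⁻¹) := by noncomm_ring
    _ = x * u⁻¹ := by rw [inv_mul_cancel₀ hu0, one_mul]

end SN

section Intertwiner

set_option synthInstance.maxHeartbeats 1000000 in
set_option maxHeartbeats 4000000 in
/-- The intertwiner exists: main non-graded statement. -/
theorem exists_intertwiner {R A : Type*} [CommRing R] [Ring A] [IsDomain A] [Algebra R A]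
    [Module.Finite R A]
    (hinj : Function.Injective (algebraMap R A))
    (hcent : ∀ a : A, (∀ b : A, b * a = a * b) → ∃ r, algebraMap R A r = a)
    (φ : A ≃+* A)
    (hφ : ∀ r, φ (algebraMap R A r) = algebraMap R A r) :
    ∃ a : A, a ≠ 0 ∧ ∀ x : A, a * φ x = x * a := by
  haveI : IsDomain R := Function.Injective.isDomain (algebraMap R A) hinj
  set F := FractionRing R with hF
  set S := nonZeroDivisors R with hS
  -- the localized algebra
  let f : A →ₗ[R] F ⊗[R] A := TensorProduct.mk R F A 1
  haveI hloc : IsLocalizedModule S f := by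
    rw [isLocalizedModule_iff_isBaseChange S F f]
    exact TensorProduct.isBaseChange R A F
  let ι : A →ₐ[R] F ⊗[R] A := Algebra.TensorProduct.includeRight
  have hιf : ∀ a : A, ι a = f a := fun a => rfl
  -- injectivity of ι
  have hmapS : ∀ s : R, s ∈ S → ∀ a : A, s • a = 0 → a = 0 := by
    intro s hs a h
    rw [Algebra.smul_def] at h
    rcases mul_eq_zero.mp h with h' | h'
    · exact absurd (hinj (h'.trans (map_zero _).symm))
        (mem_nonZeroDivisors_iff_ne_zero.mp hs)
    · exact h'
  have hinjι : Function.Injective ι := by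
    intro a b hab
    have h0 : f (a - b) = 0 := by rw [map_sub, ← hιf, ← hιf, hab, sub_self]
    obtain ⟨s, hs⟩ := (IsLocalizedModule.eq_zero_iff S f).mp h0
    have := hmapS s.1 s.2 (a - b) hs
    exact sub_eq_zero.mp this
  -- clearing denominators
  have hsurj : ∀ y : F ⊗[R] A, ∃ (a : A) (s : R), s ∈ S ∧ s • y = ι a := by
    intro y
    obtain ⟨⟨a, s⟩, h⟩ := IsLocalizedModule.surj S f y
    exact ⟨a, s.1, s.2, by rw [hιf]; exact h⟩
  -- s-scaling is invertible on F ⊗ A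
  have hcancel : ∀ (s : R), s ∈ S → ∀ y : F ⊗[R] A, s • y = 0 → y = 0 := by
    intro s hs y h
    have h1 : (algebraMap R F s) • y = 0 := by rwa [algebraMap_smul]
    have h2 : (algebraMap R F s) ≠ 0 :=
      IsFractionRing.to_map_ne_zero_of_mem_nonZeroDivisors hs
    calc y = (algebraMap R F s)⁻¹ • ((algebraMap R F s) • y) := (inv_smul_smul₀ h2 y).symm
      _ = 0 := by rw [h1, smul_zero]
  haveI : Nontrivial (F ⊗[R] A) := ⟨ι 1, ι 0, fun h => one_ne_zero (hinjι h)⟩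
  -- domain
  haveI : NoZeroDivisors (F ⊗[R] A) := by
    constructor
    intro x y hxy
    by_contra hc
    push_neg at hc
    obtain ⟨hx, hy⟩ := hc
    obtain ⟨a, sx, hsx, hax⟩ := hsurj x
    obtain ⟨b, sy, hsy, hby⟩ := hsurj y
    have ha : a ≠ 0 := by
      intro h
      rw [h, map_zero] at hax
      exact hx (hcancel sx hsx x hax)
    have hb : b ≠ 0 := by
      intro h
      rw [h, map_zero] at hby
      exact hy (hcancel sy hsy y hby)
    have : ι (a * b) = 0 := by
      rw [map_mul, ← hax, ← hby, smul_mul_assoc, mul_smul_comm, hxy, smul_zero, smul_zero]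
    have : a * b = 0 := hinjι (this.trans (map_zero ι).symm)
    rcases mul_eq_zero.mp this with h | h
    exacts [ha h, hb h]
  haveI : IsDomain (F ⊗[R] A) := NoZeroDivisors.to_isDomain _
  haveI : FiniteDimensional F (F ⊗[R] A) := inferInstance
  -- centrality
  have hc : ∀ b : F ⊗[R] A, (∀ x : F ⊗[R] A, x * b = b * x) →
      ∃ g : F, algebraMap F (F ⊗[R] A) g = b := by
    intro v hv
    obtain ⟨a, s, hs, hsv⟩ := hsurj v
    have hcen_a : ∀ w : A, w * a = a * w := by
      intro w
      apply hinjι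
      calc ι (w * a) = ι w * ι a := map_mul _ _ _
        _ = ι w * (s • v) := by rw [hsv]
        _ = s • (ι w * v) := mul_smul_comm _ _ _
        _ = s • (v * ι w) := by rw [hv (ι w)]
        _ = (s • v) * ι w := (smul_mul_assoc _ _ _).symm
        _ = ι a * ι w := by rw [hsv]
        _ = ι (a * w) := (map_mul _ _ _).symm
    obtain ⟨r, hr⟩ := hcent a hcen_a
    have h1 : ι a = algebraMap F (F ⊗[R] A) (algebraMap R F r) := by
      rw [← hr, AlgHom.commutes, IsScalarTower.algebraMap_apply R F (F ⊗[R] A)]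
    have h2 : s • v = algebraMap F (F ⊗[R] A) (algebraMap R F s) * v := by
      rw [← IsScalarTower.algebraMap_apply R F (F ⊗[R] A), ← Algebra.smul_def]
    have hsne : (algebraMap R F s) ≠ 0 :=
      IsFractionRing.to_map_ne_zero_of_mem_nonZeroDivisors hs
    refine ⟨(algebraMap R F s)⁻¹ * algebraMap R F r, ?_⟩
    rw [map_mul]
    rw [← h1, ← hsv, h2, ← mul_assoc, ← map_mul, inv_mul_cancel₀ hsne, map_one, one_mul]
  -- the extended automorphism
  let φ' : A →ₐ[R] A := ⟨(φ : A →+* A), hφ⟩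
  let φ'' : A →ₐ[R] A := ⟨(φ.symm : A →+* A), fun r => by
    conv_lhs => rw [← hφ r]
    exact φ.symm_apply_apply _⟩
  let Ψ : F ⊗[R] A →ₐ[F] F ⊗[R] A := Algebra.TensorProduct.map (AlgHom.id F F) φ'
  let Ψ' : F ⊗[R] A →ₐ[F] F ⊗[R] A := Algebra.TensorProduct.map (AlgHom.id F F) φ''
  have hΨΨ' : ∀ y, Ψ (Ψ' y) = y := by
    intro y
    induction y using TensorProduct.induction_on with
    | zero => simp
    | tmul g a =>
        simp only [Ψ, Ψ', Algebra.TensorProduct.map_tmul, AlgHom.id_apply]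
        congr 1
        exact φ.apply_symm_apply a
    | add a b ha hb => rw [map_add, map_add, ha, hb]
  have hΨ'Ψ : ∀ y, Ψ' (Ψ y) = y := by
    intro y
    induction y using TensorProduct.induction_on with
    | zero => simp
    | tmul g a =>
        simp only [Ψ, Ψ', Algebra.TensorProduct.map_tmul, AlgHom.id_apply]
        congr 1
        exact φ.symm_apply_apply a
    | add a b ha hb => rw [map_add, map_add, ha, hb]
  let ψ : (F ⊗[R] A) ≃ₐ[F] (F ⊗[R] A) :=
    AlgEquiv.ofAlgHom Ψ Ψ' (AlgHom.ext hΨΨ') (AlgHom.ext hΨ'Ψ)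
  have hψι : ∀ x : A, ψ (ι x) = ι (φ x) := by
    intro x
    show Ψ ((1 : F) ⊗ₜ x) = (1 : F) ⊗ₜ (φ x)
    simp only [Ψ, Algebra.TensorProduct.map_tmul, AlgHom.id_apply]
    rfl
  -- apply Skolem--Noether
  obtain ⟨u, hu0, hu⟩ := skolemNoether hc ψ
  obtain ⟨a₀, s, hs, hsa⟩ := hsurj u
  have ha₀ : a₀ ≠ 0 := by
    intro h
    rw [h, map_zero] at hsa
    exact hu0 (hcancel s hs u hsa)
  refine ⟨a₀, ha₀, fun x => ?_⟩
  apply hinjι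
  calc ι (a₀ * φ x) = ι a₀ * ι (φ x) := map_mul _ _ _
    _ = (s • u) * ψ (ι x) := by rw [hsa, hψι]
    _ = s • (u * ψ (ι x)) := smul_mul_assoc _ _ _
    _ = s • (ι x * u) := by rw [hu (ι x)]
    _ = ι x * (s • u) := (mul_smul_comm _ _ _).symm
    _ = ι x * ι a₀ := by rw [hsa]
    _ = ι (x * a₀) := (map_mul _ _ _).symm

end Intertwiner

section Graded

variable {k A G : Type*} [Field k] [Ring A] [Algebra k A]
variable [AddCommGroup G] [DecidableEq G]
variable (𝒜 : G → Submodule k A) [GradedAlgebra 𝒜]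

open DirectSum

/-- component of `x` in degree `d` -/
abbrev cpt (d : G) (x : A) : A := GradedRing.proj 𝒜 d x

lemma cpt_apply (d : G) (x : A) : cpt 𝒜 d x = (DirectSum.decompose 𝒜 x d : A) :=
  GradedRing.proj_apply 𝒜 d x

lemma cpt_of_mem {g d : G} {x : A} (hx : x ∈ 𝒜 g) :
    cpt 𝒜 d x = if g = d then x else 0 := by
  rw [cpt_apply]
  split_ifs with h
  · subst h; exact DirectSum.decompose_of_mem_same 𝒜 hx
  · exact DirectSum.decompose_of_mem_ne 𝒜 hx h

variable [(i : G) → (x : (𝒜 i)) → Decidable (x ≠ 0)]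

lemma supp_nonempty {x : A} (hx : x ≠ 0) :
    (DFinsupp.support (DirectSum.decompose 𝒜 x)).Nonempty := by
  rw [Finset.nonempty_iff_ne_empty]
  intro h
  apply hx
  conv_lhs => rw [← DirectSum.sum_support_decompose 𝒜 x]
  rw [h, Finset.sum_empty]

lemma cpt_mem (d : G) (x : A) : cpt 𝒜 d x ∈ 𝒜 d := SetLike.coe_mem _

lemma mem_supp_iff (d : G) (x : A) :
    d ∈ DFinsupp.support (DirectSum.decompose 𝒜 x) ↔ cpt 𝒜 d x ≠ 0 := by
  rw [DFinsupp.mem_support_iff, cpt_apply]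
  constructor
  · intro h h'
    exact h (Subtype.ext h')
  · intro h h'
    exact h (by rw [h', Submodule.coe_zero])

lemma cpt_sum {ι : Type*} (d : G) (s : Finset ι) (f : ι → A) :
    cpt 𝒜 d (∑ i ∈ s, f i) = ∑ i ∈ s, cpt 𝒜 d (f i) := by
  exact map_sum (GradedRing.proj 𝒜 d) f s

/-- Expansion of the degree-`d` component of a product over the support of the left factor. -/
lemma cpt_mul (u v : A) (d : G) :
    cpt 𝒜 d (u * v) =
      ∑ i ∈ DFinsupp.support (DirectSum.decompose 𝒜 u),
        cpt 𝒜 i u * cpt 𝒜 (d - i) v := by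
  classical
  conv_lhs => rw [← DirectSum.sum_support_decompose 𝒜 u, Finset.sum_mul, cpt_sum]
  apply Finset.sum_congr rfl
  intro i _
  conv_lhs => rw [← DirectSum.sum_support_decompose 𝒜 v, Finset.mul_sum, cpt_sum]
  simp only [← cpt_apply 𝒜]
  have key : ∀ j ∈ DFinsupp.support (DirectSum.decompose 𝒜 v),
      cpt 𝒜 d (cpt 𝒜 i u * cpt 𝒜 j v) =
        if j = d - i then cpt 𝒜 i u * cpt 𝒜 j v else 0 := by
    intro j _
    rw [cpt_of_mem 𝒜 (SetLike.mul_mem_graded (cpt_mem 𝒜 i u) (cpt_mem 𝒜 j v))]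
    congr 1
    simp only [eq_iff_iff]
    constructor
    · intro h; rw [← h]; abel
    · intro h; rw [h]; abel
  rw [Finset.sum_congr rfl key, Finset.sum_ite_eq' _ (d - i) (fun j => cpt 𝒜 i u * cpt 𝒜 j v)]
  by_cases hj : d - i ∈ DFinsupp.support (DirectSum.decompose 𝒜 v)
  · rw [if_pos hj]
  · rw [if_neg hj]
    rw [DFinsupp.notMem_support_iff] at hj
    rw [cpt_apply 𝒜 (d - i) v, hj, Submodule.coe_zero, mul_zero]

lemma cpt_mul_right_mem (u : A) {v : A} {g : G} (hv : v ∈ 𝒜 g) (d : G) :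
    cpt 𝒜 (d + g) (u * v) = cpt 𝒜 d u * v := by
  classical
  rw [cpt_mul]
  have key : ∀ i ∈ DFinsupp.support (DirectSum.decompose 𝒜 u),
      cpt 𝒜 i u * cpt 𝒜 (d + g - i) v = if i = d then cpt 𝒜 i u * v else 0 := by
    intro i _
    rw [cpt_of_mem 𝒜 hv, mul_ite, mul_zero]
    congr 1
    simp only [eq_iff_iff]
    rw [eq_sub_iff_add_eq]
    constructor
    · intro h
      have h2 : i + g = d + g := by rw [add_comm i g]; exact h
      exact add_right_cancel h2
    · rintro rfl
      rw [add_comm]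
  rw [Finset.sum_congr rfl key, Finset.sum_ite_eq' _ d (fun i => cpt 𝒜 i u * v)]
  by_cases hd : d ∈ DFinsupp.support (DirectSum.decompose 𝒜 u)
  · rw [if_pos hd]
  · rw [if_neg hd]
    rw [DFinsupp.notMem_support_iff] at hd
    rw [cpt_apply 𝒜 d u, hd, Submodule.coe_zero, zero_mul]

lemma cpt_mul_left_mem {u : A} (v : A) {g : G} (hu : u ∈ 𝒜 g) (d : G) :
    cpt 𝒜 (g + d) (u * v) = u * cpt 𝒜 d v := by
  classical
  conv_lhs => rw [← DirectSum.sum_support_decompose 𝒜 v, Finset.mul_sum, cpt_sum]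
  simp only [← cpt_apply 𝒜]
  have key : ∀ j ∈ DFinsupp.support (DirectSum.decompose 𝒜 v),
      cpt 𝒜 (g + d) (u * cpt 𝒜 j v) = if j = d then u * cpt 𝒜 j v else 0 := by
    intro j _
    rw [cpt_of_mem 𝒜 (SetLike.mul_mem_graded hu (cpt_mem 𝒜 j v))]
    congr 1
    simp only [eq_iff_iff]
    constructor
    · intro h; exact add_left_cancel h
    · rintro rfl; rfl
  rw [Finset.sum_congr rfl key, Finset.sum_ite_eq' _ d (fun j => u * cpt 𝒜 j v)]
  by_cases hd : d ∈ DFinsupp.support (DirectSum.decompose 𝒜 v)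
  · rw [if_pos hd]
  · rw [if_neg hd]
    rw [DFinsupp.notMem_support_iff] at hd
    rw [cpt_apply 𝒜 d v, hd, Submodule.coe_zero, mul_zero]

lemma supp_mul_le (u v : A) (d : G)
    (hd : d ∈ DFinsupp.support (DirectSum.decompose 𝒜 (u * v))) :
    ∃ i ∈ DFinsupp.support (DirectSum.decompose 𝒜 u),
      ∃ j ∈ DFinsupp.support (DirectSum.decompose 𝒜 v), d = i + j := by
  rw [mem_supp_iff, cpt_mul] at hd
  obtain ⟨i, hi, hne⟩ := Finset.exists_ne_zero_of_sum_ne_zero hd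
  refine ⟨i, hi, d - i, ?_, by abel⟩
  rw [mem_supp_iff]
  intro h
  rw [h, mul_zero] at hne
  exact hne rfl

end Graded

end OzoneAux

open OzoneAux in
set_option maxHeartbeats 1000000 in
/-- Let `G` be a linearly ordered abelian group and `A` a `G`-graded
`k`-algebra which is a domain and a finitely generated module over its center. Then for
every `φ` in the ozone group of `A` there is a nonzero homogeneous normal element `a`
with `a·φ(x) = x·a` for all `x`; in particular every ozone automorphism of `A` is a
graded automorphism (it maps each homogeneous component into itself). -/
theorem stmt1 (k A : Type*) [Field k] [CharZero k] [Ring A] [Algebra k A] [IsDomain A]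
    (G : Type*) [AddCommGroup G] [LinearOrder G] [IsOrderedAddMonoid G] [DecidableEq G]
    (𝒜 : G → Submodule k A) [GradedAlgebra 𝒜]
    [Module.Finite (Subalgebra.center k A) A]
    (φ : A ≃ₐ[k] A) (hφ : φ ∈ ozoneGroup k A) :
    (∃ (a : A) (g : G), a ≠ 0 ∧ a ∈ 𝒜 g ∧ IsNormal a ∧ ∀ x : A, a * φ x = x * a) ∧
    (∀ (g : G) (x : A), x ∈ 𝒜 g → φ x ∈ 𝒜 g) := by
  classical
  set Z := Subalgebra.center k A with hZ
  letI alg : Algebra Z A := RingHom.toAlgebra' (Z.val : Z →ₐ[k] A).toRingHom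
    (fun c x => (Subalgebra.mem_center_iff.mp c.2 x).symm)
  have halgmap : ∀ r : Z, algebraMap Z A r = (r : A) := fun r => rfl
  haveI hfin : Module.Finite Z A := ‹Module.Finite Z A›
  have hinj : Function.Injective (algebraMap Z A) := fun r s h => Subtype.ext h
  have hcent : ∀ a : A, (∀ b : A, b * a = a * b) → ∃ r : Z, algebraMap Z A r = a :=
    fun a ha => ⟨⟨a, Subalgebra.mem_center_iff.mpr ha⟩, rfl⟩
  have hφZ : ∀ r : Z, (φ : A ≃+* A) (algebraMap Z A r) = algebraMap Z A r :=
    fun r => hφ r.1 r.2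
  obtain ⟨a₀, ha₀, hrel⟩ := @exists_intertwiner Z A _ _ _ alg hfin hinj hcent (φ : A ≃+* A) hφZ
  have hrel' : ∀ x : A, a₀ * φ x = x * a₀ := hrel
  -- support of a₀
  set Su := DFinsupp.support (DirectSum.decompose 𝒜 a₀) with hSu
  have hSune : Su.Nonempty := supp_nonempty 𝒜 ha₀
  set M := Su.max' hSune with hM
  set m := Su.min' hSune with hm
  -- part 2
  have part2 : ∀ (g : G) (x : A), x ∈ 𝒜 g → φ x ∈ 𝒜 g := by
    intro g x hx
    rcases eq_or_ne x 0 with rfl | hx0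
    · rw [map_zero]; exact (𝒜 g).zero_mem
    have hw : φ x ≠ 0 := fun h => hx0 (φ.injective (h.trans (map_zero φ).symm))
    set w := φ x with hwdef
    set Sw := DFinsupp.support (DirectSum.decompose 𝒜 w) with hSw
    have hSwne : Sw.Nonempty := supp_nonempty 𝒜 hw
    set W := Sw.max' hSwne with hW
    set wm := Sw.min' hSwne with hwm
    have hsx : ∀ i ∈ DFinsupp.support (DirectSum.decompose 𝒜 x), i = g := by
      intro i hi
      rw [mem_supp_iff, cpt_of_mem 𝒜 hx] at hi
      by_contra hne
      rw [if_neg (fun h => hne h.symm)] at hi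
      exact hi rfl
    -- top degree
    have htop : cpt 𝒜 (M + W) (a₀ * w) ≠ 0 := by
      rw [cpt_mul]
      rw [Finset.sum_eq_single M]
      · exact mul_ne_zero ((mem_supp_iff 𝒜 M a₀).mp (Su.max'_mem hSune))
          (by
            have : M + W - M = W := by abel
            rw [this]
            exact (mem_supp_iff 𝒜 W w).mp (Sw.max'_mem hSwne))
      · intro i hi hne
        have hnotmem : M + W - i ∉ Sw := by
          intro hmem
          apply hne
          have h1 : i ≤ M := Su.le_max' i hi
          have h2 : M + W - i ≤ W := Sw.le_max' _ hmem
          have h3 : M ≤ i := by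
            rw [sub_le_iff_le_add, add_comm W i] at h2
            exact le_of_add_le_add_right h2
          exact le_antisymm h1 h3
        rw [hSw, mem_supp_iff] at hnotmem
        push_neg at hnotmem
        rw [hnotmem, mul_zero]
      · intro h
        exact absurd (Su.max'_mem hSune) h
    have htop2 : M + W ∈ DFinsupp.support (DirectSum.decompose 𝒜 (x * a₀)) := by
      rw [← hrel' x, ← hwdef]
      exact (mem_supp_iff 𝒜 _ _).mpr htop
    have hWg : W ≤ g := by
      obtain ⟨i, hi, j, hj, hij⟩ := supp_mul_le 𝒜 x a₀ (M + W) htop2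
      rw [hsx i hi] at hij
      have hjM : j ≤ M := Su.le_max' j hj
      have : M + W ≤ g + M := by rw [hij]; exact add_le_add_right hjM g
      rw [add_comm g M] at this
      exact le_of_add_le_add_left this
    -- bottom degree
    have hbot : cpt 𝒜 (m + wm) (a₀ * w) ≠ 0 := by
      rw [cpt_mul]
      rw [Finset.sum_eq_single m]
      · exact mul_ne_zero ((mem_supp_iff 𝒜 m a₀).mp (Su.min'_mem hSune))
          (by
            have : m + wm - m = wm := by abel
            rw [this]
            exact (mem_supp_iff 𝒜 wm w).mp (Sw.min'_mem hSwne))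
      · intro i hi hne
        have hnotmem : m + wm - i ∉ Sw := by
          intro hmem
          apply hne
          have h1 : m ≤ i := Su.min'_le i hi
          have h2 : wm ≤ m + wm - i := Sw.min'_le _ hmem
          have h3 : i ≤ m := by
            rw [le_sub_iff_add_le, add_comm wm i] at h2
            exact le_of_add_le_add_right h2
          exact le_antisymm h3 h1
        rw [hSw, mem_supp_iff] at hnotmem
        push_neg at hnotmem
        rw [hnotmem, mul_zero]
      · intro h
        exact absurd (Su.min'_mem hSune) h
    have hbot2 : m + wm ∈ DFinsupp.support (DirectSum.decompose 𝒜 (x * a₀)) := by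
      rw [← hrel' x, ← hwdef]
      exact (mem_supp_iff 𝒜 _ _).mpr hbot
    have hgwm : g ≤ wm := by
      obtain ⟨i, hi, j, hj, hij⟩ := supp_mul_le 𝒜 x a₀ (m + wm) hbot2
      rw [hsx i hi] at hij
      have hjm : m ≤ j := Su.min'_le j hj
      have : g + m ≤ m + wm := by rw [hij]; exact add_le_add_right hjm g
      rw [add_comm g m] at this
      exact le_of_add_le_add_left this
    -- all degrees in Sw equal g
    have hall : ∀ j ∈ Sw, j = g := by
      intro j hj
      have h1 : j ≤ W := Sw.le_max' j hj
      have h2 : wm ≤ j := Sw.min'_le j hj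
      exact le_antisymm (h1.trans hWg) (hgwm.trans h2)
    have hwsum : w = ∑ j ∈ Sw, (DirectSum.decompose 𝒜 w j : A) :=
      (DirectSum.sum_support_decompose 𝒜 w).symm
    show w ∈ 𝒜 g
    rw [hwsum]
    apply Submodule.sum_mem
    intro j hj
    have hjg := hall j hj
    subst hjg
    exact SetLike.coe_mem _
  -- part 1
  set a := cpt 𝒜 M a₀ with ha
  have hane : a ≠ 0 := (mem_supp_iff 𝒜 M a₀).mp (Su.max'_mem hSune)
  have hamem : a ∈ 𝒜 M := cpt_mem 𝒜 M a₀
  have hkey : ∀ (g : G) (y : A), y ∈ 𝒜 g → a * φ y = y * a := by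
    intro g y hy
    have hphi : φ y ∈ 𝒜 g := part2 g y hy
    have e1 : cpt 𝒜 (M + g) (a₀ * φ y) = a * φ y := cpt_mul_right_mem 𝒜 a₀ hphi M
    have e2 : cpt 𝒜 (M + g) (y * a₀) = y * a := by
      rw [add_comm M g]
      exact cpt_mul_left_mem 𝒜 a₀ hy M
    rw [← e1, hrel' y, e2]
  have hall : ∀ x : A, a * φ x = x * a := by
    intro x
    calc a * φ x
        = a * φ (∑ i ∈ DFinsupp.support (DirectSum.decompose 𝒜 x),
            (DirectSum.decompose 𝒜 x i : A)) := by
          rw [DirectSum.sum_support_decompose 𝒜 x]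
      _ = ∑ i ∈ DFinsupp.support (DirectSum.decompose 𝒜 x),
            a * φ ((DirectSum.decompose 𝒜 x i : A)) := by
          rw [map_sum φ, Finset.mul_sum]
      _ = ∑ i ∈ DFinsupp.support (DirectSum.decompose 𝒜 x),
            ((DirectSum.decompose 𝒜 x i : A)) * a :=
          Finset.sum_congr rfl (fun i _ => hkey i _ (SetLike.coe_mem _))
      _ = (∑ i ∈ DFinsupp.support (DirectSum.decompose 𝒜 x),
            (DirectSum.decompose 𝒜 x i : A)) * a := by rw [Finset.sum_mul]
      _ = x * a := by rw [DirectSum.sum_support_decompose 𝒜 x]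
  have hnormal : IsNormal a := by
    apply Set.eq_of_subset_of_subset
    · rintro z ⟨y, rfl⟩
      exact ⟨φ.symm y, by simp only; rw [← hall (φ.symm y), AlgEquiv.apply_symm_apply]⟩
    · rintro z ⟨y, rfl⟩
      exact ⟨φ y, hall y⟩
  exact ⟨⟨a, M, hane, hamem, hnormal, hall⟩, part2⟩
end
end

section
/- Let A be a ℤ-graded k-algebra which is a domain and a finitely generated module over its center Z. Then the ozone group Oz(A) is trivial if and only if every normal element of A is central. -/
noncomputable section

set_option synthInstance.maxHeartbeats 1000000
set_option maxHeartbeats 2000000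
set_option linter.unusedSectionVars false
set_option linter.unnecessarySimpa false

open Finset TensorProduct

open Finset

section SN
variable {F D : Type*} [Field F] [Ring D] [Algebra F D]

/-- Independence lemma: in an algebra with left inverses whose "commutant" is `F`,
if `∑ aᵢ x bᵢ = 0` for all `x` with `bᵢ` linearly independent, then all `aᵢ = 0`. -/
theorem sn_indep (hinv : ∀ d : D, d ≠ 0 → ∃ c, c * d = 1)
    (hcen : ∀ d : D, (∀ y, d * y = y * d) → ∃ f : F, algebraMap F D f = d)
    {ι : Type*} (b : ι → D) (hb : LinearIndependent F b) :
    ∀ (s : Finset ι) (a : ι → D), (∀ x, ∑ i ∈ s, a i * x * b i = 0) → ∀ i ∈ s, a i = 0 := by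
  classical
  intro s
  induction s using Finset.strongInduction with
  | _ s IH =>
    intro a H
    by_contra hcon
    push_neg at hcon
    obtain ⟨i₀, hi₀s, hi₀⟩ := hcon
    obtain ⟨c, hc1⟩ := hinv _ hi₀
    set a' : ι → D := fun i => c * a i with ha'
    have H' : ∀ x, ∑ i ∈ s, a' i * x * b i = 0 := by
      intro x
      have h0 := H x
      calc ∑ i ∈ s, a' i * x * b i = c * ∑ i ∈ s, a i * x * b i := by
            rw [Finset.mul_sum]; exact Finset.sum_congr rfl fun i _ => by
              simp [ha', mul_assoc]
        _ = 0 := by rw [h0, mul_zero]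
    have ha'i₀ : a' i₀ = 1 := hc1
    have key : ∀ i ∈ s.erase i₀, ∀ y, a' i * y = y * a' i := by
      intro i hi y
      have H2 : ∀ x, ∑ j ∈ s.erase i₀, (a' j * y - y * a' j) * x * b j = 0 := by
        intro x
        have e1 : ∑ j ∈ s, (a' j * y - y * a' j) * x * b j = 0 := by
          have h1 := H' (y * x)
          have h2 : y * ∑ j ∈ s, a' j * x * b j = 0 := by rw [H' x, mul_zero]
          rw [Finset.mul_sum] at h2
          have : ∑ j ∈ s, (a' j * y - y * a' j) * x * b j
              = (∑ j ∈ s, a' j * (y * x) * b j) - ∑ j ∈ s, y * (a' j * x * b j) := by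
            rw [← Finset.sum_sub_distrib]
            exact Finset.sum_congr rfl fun j _ => by noncomm_ring
          rw [this, h1, h2, sub_zero]
        have e2 : (a' i₀ * y - y * a' i₀) * x * b i₀ = 0 := by
          rw [ha'i₀]; simp
        rw [← Finset.add_sum_erase _ _ hi₀s, e2, zero_add] at e1
        exact e1
      have := IH (s.erase i₀) (Finset.erase_ssubset hi₀s)
        (fun j => a' j * y - y * a' j) H2 i hi
      exact sub_eq_zero.mp this
    have hgdef : ∀ i ∈ s.erase i₀, ∃ f : F, algebraMap F D f = a' i :=
      fun i hi => hcen _ (key i hi)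
    choose! g hg using hgdef
    set g' : ι → F := fun i => if i = i₀ then 1 else g i with hg'
    have hga : ∀ i ∈ s, algebraMap F D (g' i) = a' i := by
      intro i hi
      by_cases h : i = i₀
      · subst h; simp [hg', ha'i₀]
      · simp only [hg', if_neg h]
        exact hg i (Finset.mem_erase.mpr ⟨h, hi⟩)
    have hsum : ∑ i ∈ s, g' i • b i = 0 := by
      have := H' 1
      calc ∑ i ∈ s, g' i • b i = ∑ i ∈ s, a' i * 1 * b i := by
            refine Finset.sum_congr rfl fun i hi => ?_
            rw [mul_one, Algebra.smul_def, hga i hi]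
        _ = 0 := H' 1
    have := linearIndependent_iff'.mp hb s g' hsum i₀ hi₀s
    have h2 : (1 : F) = 0 := by simpa [hg'] using this
    exact one_ne_zero h2

theorem skolemNoether [Nontrivial D] [FiniteDimensional F D]
    (hinv : ∀ d : D, d ≠ 0 → ∃ c, c * d = 1)
    (hcen : ∀ d : D, (∀ y, d * y = y * d) → ∃ f : F, algebraMap F D f = d)
    (σ : D →ₐ[F] D) :
    ∃ u : D, u ≠ 0 ∧ ∀ x, σ x * u = u * x := by
  classical
  set m := Module.finrank F D with hm
  set e : Module.Basis (Fin m) F D := Module.finBasis F D with he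
  set Φ : Fin m × Fin m → (D →ₗ[F] D) :=
    fun p => (LinearMap.mulRight F (e p.2)) ∘ₗ (LinearMap.mulLeft F (e p.1)) with hΦdef
  have hΦap : ∀ p x, Φ p x = e p.1 * x * e p.2 := fun p x => rfl
  have hΦ : LinearIndependent F Φ := by
    rw [Fintype.linearIndependent_iff]
    intro g hg
    have hx : ∀ x, ∑ j, (∑ i, g (i, j) • e i) * x * e j = 0 := by
      intro x
      have h1 : (∑ p : Fin m × Fin m, g p • Φ p) x = 0 := by rw [hg]; rfl
      rw [LinearMap.sum_apply] at h1
      calc ∑ j, (∑ i, g (i, j) • e i) * x * e j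
          = ∑ j, ∑ i, (g (i, j) • e i) * x * e j := by
            refine Finset.sum_congr rfl fun j _ => ?_
            rw [Finset.sum_mul, Finset.sum_mul]
        _ = ∑ p : Fin m × Fin m, (g p • e p.1) * x * e p.2 := by
            rw [Fintype.sum_prod_type_right]
        _ = ∑ p : Fin m × Fin m, (g p • Φ p) x := by
            refine Finset.sum_congr rfl fun p _ => ?_
            rw [LinearMap.smul_apply, hΦap, smul_mul_assoc, smul_mul_assoc]
        _ = 0 := h1
    intro p
    have hj := sn_indep hinv hcen e e.linearIndependent Finset.univ
      (fun j => ∑ i, g (i, j) • e i) (fun x => hx x) p.2 (Finset.mem_univ _)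
    have := Fintype.linearIndependent_iff.mp e.linearIndependent
      (fun i => g (i, p.2)) hj p.1
    exact this
  have hm0 : 0 < m := Module.finrank_pos
  haveI : Nonempty (Fin m) := Fin.pos_iff_nonempty.mp hm0
  have hcard : Fintype.card (Fin m × Fin m) = Module.finrank F (D →ₗ[F] D) := by
    simp [Module.finrank_linearMap, hm]
  set B := basisOfLinearIndependentOfCardEqFinrank hΦ hcard with hB
  have hBco : ⇑B = Φ := coe_basisOfLinearIndependentOfCardEqFinrank hΦ hcard
  set co : Fin m × Fin m → F := fun p => B.repr σ.toLinearMap p with hco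
  have hrepr : σ.toLinearMap = ∑ p, co p • Φ p := by
    conv_lhs => rw [← B.sum_repr σ.toLinearMap]
    refine Finset.sum_congr rfl fun p _ => ?_
    rw [hBco]
  set a : Fin m → D := fun j => ∑ i, co (i, j) • e i with ha
  have hσx : ∀ x, σ x = ∑ j, a j * x * e j := by
    intro x
    have h1 : σ x = (∑ p, co p • Φ p) x := by rw [← hrepr]; rfl
    rw [LinearMap.sum_apply] at h1
    rw [h1]
    calc ∑ p : Fin m × Fin m, (co p • Φ p) x
        = ∑ p : Fin m × Fin m, (co p • e p.1) * x * e p.2 := by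
          refine Finset.sum_congr rfl fun p _ => ?_
          rw [LinearMap.smul_apply, hΦap, smul_mul_assoc, smul_mul_assoc]
      _ = ∑ j, ∑ i, (co (i, j) • e i) * x * e j := by rw [Fintype.sum_prod_type_right]
      _ = ∑ j, a j * x * e j := by
          refine Finset.sum_congr rfl fun j _ => ?_
          rw [ha, Finset.sum_mul, Finset.sum_mul]
  have hkey : ∀ j, ∀ x, a j * x = σ x * a j := by
    have hsub : ∀ x y, ∑ j ∈ Finset.univ, (a j * x - σ x * a j) * y * e j = 0 := by
      intro x y
      have h1 : σ (x * y) = σ x * σ y := map_mul σ x y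
      rw [hσx (x * y), hσx y, Finset.mul_sum] at h1
      calc ∑ j ∈ Finset.univ, (a j * x - σ x * a j) * y * e j
          = (∑ j, a j * (x * y) * e j) - ∑ j, σ x * (a j * y * e j) := by
            rw [← Finset.sum_sub_distrib]
            exact Finset.sum_congr rfl fun j _ => by noncomm_ring
        _ = 0 := by rw [h1, sub_self]
    intro j x
    have := sn_indep hinv hcen e e.linearIndependent Finset.univ
      (fun j => a j * x - σ x * a j) (fun y => hsub x y) j (Finset.mem_univ _)
    exact sub_eq_zero.mp this
  have hex : ∃ j, a j ≠ 0 := by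
    by_contra hall
    push_neg at hall
    have h1 : (1 : D) = ∑ j, a j * 1 * e j := by rw [← hσx 1, map_one]
    rw [Finset.sum_eq_zero (fun j _ => by rw [hall j, zero_mul, zero_mul])] at h1
    exact one_ne_zero h1
  obtain ⟨j, hj⟩ := hex
  exact ⟨a j, hj, fun x => (hkey j x).symm⟩

end SN



section Main

variable (k A : Type*) [Field k] [Ring A] [Algebra k A]

instance centerAlgebra : Algebra (Subalgebra.center k A) A :=
  { algebraMap := ((Subalgebra.center k A).val : _ →ₐ[k] A).toRingHom
    commutes' := fun z a => (Subalgebra.mem_center_iff.mp z.2 a).symm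
    smul_def' := fun _ _ => rfl }

abbrev Zc := Subalgebra.center k A
abbrev Fc := FractionRing (Zc k A)
abbrev Dc := TensorProduct (Zc k A) (Fc k A) A

noncomputable abbrev ι0 : A →ₗ[Zc k A] Dc k A := TensorProduct.mk (Zc k A) (Fc k A) A 1

instance : IsLocalizedModule (nonZeroDivisors (Zc k A)) (ι0 k A) :=
  (isLocalizedModule_iff_isBaseChange (nonZeroDivisors (Zc k A)) (Fc k A) _).mpr
    (TensorProduct.isBaseChange _ _ _)

variable [IsDomain A] [Module.Finite (Zc k A) A]

lemma tmul_eq_zero {a : A} (h : ι0 k A a = 0) : a = 0 := by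
  obtain ⟨s, hs⟩ :=
    (IsLocalizedModule.eq_zero_iff (nonZeroDivisors (Zc k A)) (ι0 k A)).mp h
  have h1 : ((s : Zc k A) : A) * a = 0 := hs
  rcases mul_eq_zero.mp h1 with h2 | h2
  · exact absurd (Subtype.ext h2 : (s : Zc k A) = 0) (nonZeroDivisors.coe_ne_zero s)
  · exact h2

lemma smul_eq_zero_d (s : nonZeroDivisors (Zc k A)) {x : Dc k A} (h : s • x = 0) : x = 0 := by
  have h1 : (algebraMap (Zc k A) (Fc k A) (s : Zc k A)) • x = 0 := by
    rwa [algebraMap_smul]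
  rcases smul_eq_zero.mp h1 with h2 | h2
  · exact absurd h2 (IsFractionRing.to_map_ne_zero_of_mem_nonZeroDivisors s.2)
  · exact h2

lemma dc_nontrivial : Nontrivial (Dc k A) := by
  refine ⟨1, 0, fun h => one_ne_zero (tmul_eq_zero k A ?_)⟩
  show (1 : Fc k A) ⊗ₜ[Zc k A] (1 : A) = 0
  rw [← Algebra.TensorProduct.one_def]
  exact h

lemma dc_nzd : ∀ x y : Dc k A, x * y = 0 → x = 0 ∨ y = 0 := by
  intro x y hxy
  by_contra hcon
  push_neg at hcon
  obtain ⟨hx, hy⟩ := hcon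
  obtain ⟨⟨a, s⟩, ha'⟩ := IsLocalizedModule.surj (nonZeroDivisors (Zc k A)) (ι0 k A) x
  obtain ⟨⟨b, t⟩, hb'⟩ := IsLocalizedModule.surj (nonZeroDivisors (Zc k A)) (ι0 k A) y
  have ha : s • x = (1 : Fc k A) ⊗ₜ[Zc k A] a := ha'
  have hb : t • y = (1 : Fc k A) ⊗ₜ[Zc k A] b := hb'
  have hab : ι0 k A (a * b) = 0 := by
    show (1 : Fc k A) ⊗ₜ[Zc k A] (a * b) = 0
    calc (1 : Fc k A) ⊗ₜ[Zc k A] (a * b)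
        = ((1 : Fc k A) ⊗ₜ[Zc k A] a) * ((1 : Fc k A) ⊗ₜ[Zc k A] b) := by
          rw [Algebra.TensorProduct.tmul_mul_tmul, one_mul]
      _ = (s • x) * (t • y) := by rw [← ha, ← hb]
      _ = s • t • (x * y) := by rw [smul_mul_assoc, mul_smul_comm]
      _ = 0 := by rw [hxy, smul_zero, smul_zero]
  rcases mul_eq_zero.mp (tmul_eq_zero k A hab) with h2 | h2
  · subst h2
    rw [TensorProduct.tmul_zero] at ha
    exact hx (smul_eq_zero_d k A s ha)
  · subst h2
    rw [TensorProduct.tmul_zero] at hb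
    exact hy (smul_eq_zero_d k A t hb)

lemma dc_hinv : ∀ d : Dc k A, d ≠ 0 → ∃ c, c * d = 1 := by
  intro d hd
  have hinj : Function.Injective (LinearMap.mulRight (Fc k A) d) := by
    intro x y hxy
    have : (x - y) * d = 0 := by
      have : x * d = y * d := hxy
      exact (sub_mul x y d).trans ((congrArg (· - y * d) this).trans (sub_self _))
    rcases dc_nzd k A _ _ this with h | h
    · exact sub_eq_zero.mp h
    · exact absurd h hd
  obtain ⟨c, hc⟩ := (LinearMap.injective_iff_surjective.mp hinj) 1
  exact ⟨c, hc⟩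

lemma dc_hcen : ∀ d : Dc k A, (∀ y, d * y = y * d) →
    ∃ f : Fc k A, algebraMap (Fc k A) (Dc k A) f = d := by
  intro d hd
  obtain ⟨⟨a, s⟩, ha'⟩ := IsLocalizedModule.surj (nonZeroDivisors (Zc k A)) (ι0 k A) d
  have ha : s • d = (1 : Fc k A) ⊗ₜ[Zc k A] a := ha'
  have hcomm : ∀ b : A, b * a = a * b := by
    intro b
    have h1 : ι0 k A (a * b) = ι0 k A (b * a) := by
      show (1 : Fc k A) ⊗ₜ[Zc k A] (a * b) = (1 : Fc k A) ⊗ₜ[Zc k A] (b * a)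
      calc (1 : Fc k A) ⊗ₜ[Zc k A] (a * b)
          = ((1 : Fc k A) ⊗ₜ[Zc k A] a) * ((1 : Fc k A) ⊗ₜ[Zc k A] b) := by
            rw [Algebra.TensorProduct.tmul_mul_tmul, one_mul]
        _ = (s • d) * ((1 : Fc k A) ⊗ₜ[Zc k A] b) := by rw [← ha]
        _ = s • (d * ((1 : Fc k A) ⊗ₜ[Zc k A] b)) := by rw [smul_mul_assoc]
        _ = s • (((1 : Fc k A) ⊗ₜ[Zc k A] b) * d) := by rw [hd]
        _ = ((1 : Fc k A) ⊗ₜ[Zc k A] b) * (s • d) := by rw [mul_smul_comm]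
        _ = ((1 : Fc k A) ⊗ₜ[Zc k A] b) * ((1 : Fc k A) ⊗ₜ[Zc k A] a) := by rw [ha]
        _ = (1 : Fc k A) ⊗ₜ[Zc k A] (b * a) := by
            rw [Algebra.TensorProduct.tmul_mul_tmul, one_mul]
    have h2 : ι0 k A (a * b - b * a) = 0 := by rw [map_sub, h1]; exact sub_self _
    exact (sub_eq_zero.mp (tmul_eq_zero k A h2)).symm
  have haZ : a ∈ Zc k A := Subalgebra.mem_center_iff.mpr hcomm
  have key : ι0 k A (a * 1) = (⟨a, haZ⟩ : Zc k A) • (1 : Dc k A) := by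
    show (1 : Fc k A) ⊗ₜ[Zc k A] ((⟨a, haZ⟩ : Zc k A) • (1 : A))
        = (⟨a, haZ⟩ : Zc k A) • (1 : Dc k A)
    rw [TensorProduct.tmul_smul, ← Algebra.TensorProduct.one_def]
  set sF := algebraMap (Zc k A) (Fc k A) (s : Zc k A) with hsF
  set aF := algebraMap (Zc k A) (Fc k A) (⟨a, haZ⟩ : Zc k A) with haF
  have hsne : sF ≠ 0 := IsFractionRing.to_map_ne_zero_of_mem_nonZeroDivisors s.2
  have h3 : sF • d = aF • (1 : Dc k A) := by
    rw [hsF, haF, algebraMap_smul, algebraMap_smul]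
    rw [← key, mul_one]
    exact ha'
  refine ⟨sF⁻¹ * aF, ?_⟩
  have h4 : d = (sF⁻¹ * aF) • (1 : Dc k A) := by
    have := congrArg (fun w => sF⁻¹ • w) h3
    simp only [← smul_assoc, smul_eq_mul, inv_mul_cancel₀ hsne, one_smul] at this
    rw [← this]
  rw [h4, Algebra.algebraMap_eq_smul_one]

theorem exists_normalizer (σ : A ≃ₐ[k] A) (hσ : ∀ z ∈ Subalgebra.center k A, σ z = z) :
    ∃ c : A, c ≠ 0 ∧ ∀ b : A, σ b * c = c * b := by
  classical
  let σZ : A →ₐ[Zc k A] A :=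
    { toRingHom := (σ : A ≃+* A).toRingHom
      commutes' := fun z => hσ z z.2 }
  let σD : Dc k A →ₐ[Fc k A] Dc k A :=
    Algebra.TensorProduct.map (AlgHom.id (Fc k A) (Fc k A)) σZ
  haveI : Nontrivial (Dc k A) := dc_nontrivial k A
  obtain ⟨u, hu0, hu⟩ := skolemNoether (dc_hinv k A) (dc_hcen k A) σD
  obtain ⟨⟨c, s⟩, hcs'⟩ := IsLocalizedModule.surj (nonZeroDivisors (Zc k A)) (ι0 k A) u
  have hcs : s • u = (1 : Fc k A) ⊗ₜ[Zc k A] c := hcs'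
  refine ⟨c, ?_, ?_⟩
  · rintro rfl
    rw [TensorProduct.tmul_zero] at hcs
    exact hu0 (smul_eq_zero_d k A s hcs)
  · intro b
    have h1 := hu ((1 : Fc k A) ⊗ₜ[Zc k A] b)
    have hσDb : σD ((1 : Fc k A) ⊗ₜ[Zc k A] b) = (1 : Fc k A) ⊗ₜ[Zc k A] (σ b) :=
      Algebra.TensorProduct.map_tmul _ _ _ _
    rw [hσDb] at h1
    have h2 : ι0 k A (σ b * c) = ι0 k A (c * b) := by
      show (1 : Fc k A) ⊗ₜ[Zc k A] (σ b * c) = (1 : Fc k A) ⊗ₜ[Zc k A] (c * b)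
      calc (1 : Fc k A) ⊗ₜ[Zc k A] (σ b * c)
          = ((1 : Fc k A) ⊗ₜ[Zc k A] σ b) * ((1 : Fc k A) ⊗ₜ[Zc k A] c) := by
            rw [Algebra.TensorProduct.tmul_mul_tmul, one_mul]
        _ = ((1 : Fc k A) ⊗ₜ[Zc k A] σ b) * (s • u) := by rw [hcs]
        _ = s • (((1 : Fc k A) ⊗ₜ[Zc k A] σ b) * u) := by rw [mul_smul_comm]
        _ = s • (u * ((1 : Fc k A) ⊗ₜ[Zc k A] b)) := by rw [h1]
        _ = (s • u) * ((1 : Fc k A) ⊗ₜ[Zc k A] b) := by rw [smul_mul_assoc]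
        _ = ((1 : Fc k A) ⊗ₜ[Zc k A] c) * ((1 : Fc k A) ⊗ₜ[Zc k A] b) := by rw [hcs]
        _ = (1 : Fc k A) ⊗ₜ[Zc k A] (c * b) := by
            rw [Algebra.TensorProduct.tmul_mul_tmul, one_mul]
    have h3 : ι0 k A (σ b * c - c * b) = 0 := by rw [map_sub, h2]; exact sub_self _
    exact sub_eq_zero.mp (tmul_eq_zero k A h3)

end Main
section Directions

variable {k A : Type*} [Field k] [Ring A] [Algebra k A] [IsDomain A]

theorem central_of_normal (h : ozoneGroup k A = ⊥) (a : A) (hn : IsNormal a) :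
    a ∈ Subalgebra.center k A := by
  classical
  by_cases ha : a = 0
  · subst ha; exact Subalgebra.zero_mem _
  refine Subalgebra.mem_center_iff.mpr fun b => ?_
  have hR : ∀ x : A, ∃ y : A, y * a = a * x := fun x =>
    Set.ext_iff.mp hn (a * x) |>.mp ⟨x, rfl⟩
  have hL : ∀ x : A, ∃ y : A, a * y = x * a := fun x =>
    Set.ext_iff.mp hn (x * a) |>.mpr ⟨x, rfl⟩
  choose f hf using hR
  choose g hg using hL
  have hfinj : ∀ y y' : A, y * a = y' * a → y = y' := fun y y' hyy =>
    mul_right_cancel₀ ha hyy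
  have hlinj : ∀ y y' : A, a * y = a * y' → y = y' := fun y y' hyy =>
    mul_left_cancel₀ ha hyy
  let σ : A ≃ₐ[k] A :=
  { toFun := f
    invFun := g
    left_inv := fun x => hlinj _ _ (by
      show a * g (f x) = a * x
      rw [hg (f x), hf x])
    right_inv := fun x => hfinj _ _ (by
      show f (g x) * a = x * a
      rw [hf (g x), hg x])
    map_mul' := fun x y => hfinj _ _ (by
      show f (x * y) * a = f x * f y * a
      calc f (x * y) * a = a * (x * y) := hf _
        _ = (a * x) * y := (mul_assoc _ _ _).symm
        _ = (f x * a) * y := by rw [hf x]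
        _ = f x * (a * y) := mul_assoc _ _ _
        _ = f x * (f y * a) := by rw [hf y]
        _ = f x * f y * a := (mul_assoc _ _ _).symm)
    map_add' := fun x y => hfinj _ _ (by
      show f (x + y) * a = (f x + f y) * a
      calc f (x + y) * a = a * (x + y) := hf _
        _ = a * x + a * y := mul_add _ _ _
        _ = f x * a + f y * a := by rw [hf x, hf y]
        _ = (f x + f y) * a := (add_mul _ _ _).symm)
    commutes' := fun r => hfinj _ _ (by
      show f (algebraMap k A r) * a = algebraMap k A r * a
      rw [hf, Algebra.commutes]) }
  have hmem : σ ∈ ozoneGroup k A := by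
    intro z hz
    show f z = z
    apply hfinj
    rw [hf z, Subalgebra.mem_center_iff.mp hz a]
  rw [h, Subgroup.mem_bot] at hmem
  have hfb : f b = b := by
    have : σ b = (1 : A ≃ₐ[k] A) b := by rw [hmem]
    have h' : σ b = b := by simpa using this
    exact h'
  calc b * a = f b * a := by rw [hfb]
    _ = a * b := hf b


end Directions

/-- Let `A` be a `ℤ`-graded `k`-algebra which is a domain and a finitely
generated module over its center `Z`. Then the ozone group of `A` is trivial if and only
if every normal element of `A` is central. -/
theorem stmt2 (k A : Type*) [Field k] [CharZero k] [Ring A] [Algebra k A] [IsDomain A]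
    (𝒜 : ℤ → Submodule k A) [GradedAlgebra 𝒜]
    [Module.Finite (Subalgebra.center k A) A] :
    ozoneGroup k A = ⊥ ↔ ∀ a : A, IsNormal a → a ∈ Subalgebra.center k A := by
  constructor
  · intro h a hn
    exact central_of_normal h a hn
  · intro h
    rw [eq_bot_iff]
    intro σ hσ
    rw [Subgroup.mem_bot]
    obtain ⟨c, hc0, hc⟩ := exists_normalizer k A σ (fun z hz => hσ z hz)
    have hnorm : IsNormal c := by
      apply Set.ext
      intro t
      constructor
      · rintro ⟨x, rfl⟩
        exact ⟨σ x, hc x⟩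
      · rintro ⟨x, rfl⟩
        refine ⟨σ.symm x, ?_⟩
        have := hc (σ.symm x)
        rw [AlgEquiv.apply_symm_apply] at this
        exact this.symm
    have hcent := h c hnorm
    refine AlgEquiv.ext fun b => ?_
    have h1 : σ b * c = b * c := (hc b).trans (Subalgebra.mem_center_iff.mp hcent b).symm
    have h2 := mul_right_cancel₀ hc0 h1
    simpa using h2

end
end

section
/- Suppose k is algebraically closed of characteristic 0. Let A be a ℤ-graded k-algebra which is a domain and a finitely generated module over its center Z, and suppose the ozone group Oz(A) is a finite abelian group. For each φ ∈ Oz(A), let [φ] denote the set consisting of 0 together with all normal elements f ∈ A whose conjugation automorphism η_f equals φ. Then each [φ] is a Z-submodule of A and the sum Σ_{φ ∈ Oz(A)} [φ] inside A is a direct sum of Z-modules. -/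
noncomputable section

namespace Stmt15Aux

variable {k A : Type*} [Field k] [Ring A] [Algebra k A]

/-- The `Z`-submodule of elements `f` with `f * φ(x) = x * f` for all `x`. -/
def ozM (φ : ↥(ozoneGroup k A)) : Submodule ↥(Subalgebra.center k A) A where
  carrier := {f : A | ∀ x : A, f * (φ : A ≃ₐ[k] A) x = x * f}
  add_mem' := by
    intro f g hf hg x
    simp only [Set.mem_setOf_eq] at *
    rw [add_mul, mul_add, hf x, hg x]
  zero_mem' := by intro x; simp
  smul_mem' := by
    intro z f hf x
    have hz : ∀ y : A, y * (z : A) = (z : A) * y :=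
      Subalgebra.mem_center_iff.mp z.2
    have hsmul : ∀ y : A, z • y = (z : A) * y := fun y => rfl
    simp only [Set.mem_setOf_eq] at hf
    calc (z • f) * (φ : A ≃ₐ[k] A) x = (z : A) * (f * (φ : A ≃ₐ[k] A) x) := by
          rw [hsmul, mul_assoc]
      _ = (z : A) * (x * f) := by rw [hf x]
      _ = ((z : A) * x) * f := by rw [mul_assoc]
      _ = (x * (z : A)) * f := by rw [hz x]
      _ = x * (z • f) := by rw [mul_assoc, ← hsmul f]

lemma mem_ozM_iff (φ : ↥(ozoneGroup k A)) (f : A) :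
    f ∈ ozM φ ↔ ∀ x : A, f * (φ : A ≃ₐ[k] A) x = x * f := Iff.rfl

lemma ozM_coe (φ : ↥(ozoneGroup k A)) [IsDomain A] :
    ((ozM φ : Submodule ↥(Subalgebra.center k A) A) : Set A) =
      {0} ∪ {f : A | f ≠ 0 ∧ IsNormal f ∧ ∀ x : A, f * (φ : A ≃ₐ[k] A) x = x * f} := by
  ext f
  constructor
  · intro hf
    replace hf : ∀ x : A, f * (φ : A ≃ₐ[k] A) x = x * f := hf
    by_cases h0 : f = 0
    · exact Or.inl h0
    · refine Or.inr ⟨h0, ?_, hf⟩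
      ext y
      constructor
      · rintro ⟨x, rfl⟩
        refine ⟨(φ : A ≃ₐ[k] A).symm x, ?_⟩
        show (φ : A ≃ₐ[k] A).symm x * f = f * x
        rw [← hf ((φ : A ≃ₐ[k] A).symm x), AlgEquiv.apply_symm_apply]
      · rintro ⟨x, rfl⟩
        refine ⟨(φ : A ≃ₐ[k] A) x, ?_⟩
        show f * (φ : A ≃ₐ[k] A) x = x * f
        exact hf x
  · rintro (h | ⟨_, _, h⟩)
    · rintro x
      simp only [Set.mem_singleton_iff] at h
      subst h
      simp
    · exact h


/-- Simultaneous eigenspace for all elements of the ozone group, with eigenvalue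
function `χ`. -/
def eig (χ : ↥(ozoneGroup k A) → k) : Submodule k A where
  carrier := {w : A | ∀ σ : ↥(ozoneGroup k A), (σ : A ≃ₐ[k] A) w = χ σ • w}
  add_mem' := by
    intro v w hv hw σ
    simp only [Set.mem_setOf_eq] at *
    rw [map_add, hv σ, hw σ, smul_add]
  zero_mem' := by intro σ; simp
  smul_mem' := by
    intro c w hw σ
    simp only [Set.mem_setOf_eq] at *
    rw [map_smul, hw σ, smul_comm]

/-- Partial simultaneous eigenspace: only conditions for `σ ∈ L`. -/
def eigL (L : List ↥(ozoneGroup k A)) (χ : ↥(ozoneGroup k A) → k) : Submodule k A where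
  carrier := {w : A | ∀ σ ∈ L, (σ : A ≃ₐ[k] A) w = χ σ • w}
  add_mem' := by
    intro v w hv hw σ hσ
    simp only [Set.mem_setOf_eq] at *
    rw [map_add, hv σ hσ, hw σ hσ, smul_add]
  zero_mem' := by intro σ _; simp
  smul_mem' := by
    intro c w hw σ hσ
    simp only [Set.mem_setOf_eq] at *
    rw [map_smul, hw σ hσ, smul_comm]

lemma pow_apply_mem_of_stable (W : Submodule k A) (σ : A ≃ₐ[k] A)
    (hW : ∀ v ∈ W, σ v ∈ W) : ∀ (j : ℕ), ∀ w ∈ W, (σ ^ j) w ∈ W := by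
  intro j
  induction j with
  | zero => intro w hw; simpa using hw
  | succ j ih =>
    intro w hw
    have : (σ ^ (j + 1)) w = (σ ^ j) (σ w) := by
      rw [pow_succ, AlgEquiv.mul_apply]
    rw [this]
    exact ih (σ w) (hW w hw)

variable [CharZero k]

/-- Decomposition of a vector into eigenvectors of a finite-order algebra
automorphism. -/
lemma single_decomp (m : ℕ) (hm : 0 < m) (ζ : k) (hζ : IsPrimitiveRoot ζ m)
    (σ : A ≃ₐ[k] A) (hσ : σ ^ m = 1) (w : A) :
    ∃ c : ℕ → A,
      (∀ t, σ (c t) = ζ ^ t • c t) ∧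
      (∀ (W : Submodule k A), (∀ v ∈ W, σ v ∈ W) → w ∈ W → ∀ t, c t ∈ W) ∧
      w = ∑ t ∈ Finset.range m, c t := by
  have hζm : ζ ^ m = 1 := hζ.pow_eq_one
  have hζ0 : ζ ≠ 0 := by
    intro h
    rw [h, zero_pow hm.ne'] at hζm
    exact zero_ne_one hζm
  have hm0 : (m : k) ≠ 0 := Nat.cast_ne_zero.mpr hm.ne'
  set c : ℕ → A :=
    fun t => (m : k)⁻¹ • ∑ j ∈ Finset.range m, (ζ⁻¹) ^ (t * j) • (σ ^ j) w with hc
  refine ⟨c, ?_, ?_, ?_⟩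
  · -- eigenvector property
    intro t
    have hinv : ζ ^ t * (ζ⁻¹) ^ t = 1 := by
      rw [← mul_pow, mul_inv_cancel₀ hζ0, one_pow]
    set h : ℕ → A := fun j => (ζ ^ t * (ζ⁻¹) ^ (t * j)) • (σ ^ j) w with hh
    have hstep : ∀ j : ℕ, (ζ⁻¹) ^ (t * j) • (σ ^ (j + 1)) w = h (j + 1) := by
      intro j
      show _ = (ζ ^ t * (ζ⁻¹) ^ (t * (j + 1))) • (σ ^ (j + 1)) w
      congr 1
      rw [Nat.mul_succ, pow_add, mul_comm ((ζ⁻¹) ^ (t * j)) ((ζ⁻¹) ^ t),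
        ← mul_assoc, hinv, one_mul]
    have hwrap : h m = h 0 := by
      show (ζ ^ t * (ζ⁻¹) ^ (t * m)) • (σ ^ m) w = (ζ ^ t * (ζ⁻¹) ^ (t * 0)) • (σ ^ 0) w
      have h1 : (ζ⁻¹) ^ (t * m) = 1 := by
        rw [inv_pow, mul_comm, pow_mul, hζm, one_pow, inv_one]
      rw [h1, hσ, Nat.mul_zero, pow_zero, pow_zero]
    have htel : ∑ j ∈ Finset.range m, h (j + 1) = ∑ j ∈ Finset.range m, h j := by
      have h1 := Finset.sum_range_succ' h m
      have h2 := Finset.sum_range_succ h m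
      rw [h2] at h1
      -- h1 : ∑ j ∈ range m, h j + h m = (∑ j ∈ range m, h (j+1)) + h 0
      rw [hwrap] at h1
      exact (add_right_cancel h1.symm)
    calc σ (c t)
        = (m : k)⁻¹ • ∑ j ∈ Finset.range m, (ζ⁻¹) ^ (t * j) • (σ ^ (j + 1)) w := by
          rw [hc]
          rw [map_smul, map_sum]
          congr 1
          refine Finset.sum_congr rfl fun j _ => ?_
          rw [map_smul]
          congr 1
          rw [pow_succ', AlgEquiv.mul_apply]
      _ = (m : k)⁻¹ • ∑ j ∈ Finset.range m, h (j + 1) := by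
          congr 1
          exact Finset.sum_congr rfl fun j _ => hstep j
      _ = (m : k)⁻¹ • ∑ j ∈ Finset.range m, h j := by rw [htel]
      _ = ζ ^ t • c t := by
          rw [hc]
          rw [smul_comm]
          congr 1
          rw [Finset.smul_sum]
          refine Finset.sum_congr rfl fun j _ => ?_
          exact mul_smul (ζ ^ t) ((ζ⁻¹) ^ (t * j)) ((σ ^ j) w)
  · -- membership in stable submodules
    intro W hW hw t
    refine Submodule.smul_mem _ _ (Submodule.sum_mem _ fun j _ => ?_)
    exact Submodule.smul_mem _ _ (pow_apply_mem_of_stable W σ hW j w hw)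
  · -- the pieces sum to w
    have hswap :
        ∑ t ∈ Finset.range m, ∑ j ∈ Finset.range m, (ζ⁻¹) ^ (t * j) • (σ ^ j) w
          = ∑ j ∈ Finset.range m, (∑ t ∈ Finset.range m, ((ζ⁻¹) ^ j) ^ t) • (σ ^ j) w := by
      rw [Finset.sum_comm]
      refine Finset.sum_congr rfl fun j _ => ?_
      rw [Finset.sum_smul]
      refine Finset.sum_congr rfl fun t _ => ?_
      congr 1
      rw [← pow_mul, mul_comm]
    have hgeom : ∀ j ∈ Finset.range m, j ≠ 0 →
        (∑ t ∈ Finset.range m, ((ζ⁻¹) ^ j) ^ t) • (σ ^ j) w = 0 := by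
      intro j hj hj0
      have hx1 : (ζ⁻¹) ^ j ≠ 1 := by
        intro h
        have : ζ ^ j = 1 := by
          rw [inv_pow] at h
          rw [← inv_inv (ζ ^ j), h, inv_one]
        exact hζ.pow_ne_one_of_pos_of_lt hj0
          (Finset.mem_range.mp hj) this
      have hxm : ((ζ⁻¹) ^ j) ^ m = 1 := by
        rw [← pow_mul, mul_comm, pow_mul, inv_pow, hζm, inv_one, one_pow]
      rw [geom_sum_eq hx1, hxm, sub_self, zero_div, zero_smul]
    symm
    calc ∑ t ∈ Finset.range m, c t
        = (m : k)⁻¹ • ∑ j ∈ Finset.range m,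
            (∑ t ∈ Finset.range m, ((ζ⁻¹) ^ j) ^ t) • (σ ^ j) w := by
          rw [← hswap, Finset.smul_sum]
      _ = (m : k)⁻¹ • ((∑ t ∈ Finset.range m, ((ζ⁻¹) ^ 0) ^ t) • (σ ^ 0) w) := by
          congr 1
          exact Finset.sum_eq_single_of_mem 0 (Finset.mem_range.mpr hm)
            (fun j hj hj0 => hgeom j hj hj0)
      _ = w := by
          simp only [pow_zero, one_pow, Finset.sum_const, Finset.card_range,
            nsmul_eq_mul, mul_one]
          rw [smul_smul, inv_mul_cancel₀ hm0, one_smul]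
          simp
  

section Diag

variable [IsAlgClosed k] [Finite ↥(ozoneGroup k A)]

lemma diagL
    (habel : ∀ σ ∈ ozoneGroup k A, ∀ τ ∈ ozoneGroup k A, σ * τ = τ * σ)
    (L : List ↥(ozoneGroup k A)) (a : A) :
    a ∈ ⨆ χ : ↥(ozoneGroup k A) → k, eigL L χ := by
  classical
  induction L with
  | nil =>
    refine Submodule.mem_iSup_of_mem (fun _ => 1) ?_
    intro σ hσ
    exact absurd hσ List.not_mem_nil
  | cons σ L ih =>
    refine (iSup_le fun χ => ?_ : (⨆ χ, eigL L χ) ≤ ⨆ χ, eigL (σ :: L) χ) ih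
    intro w hw
    -- diagonalize σ on w
    set m : ℕ := Nat.card ↥(ozoneGroup k A) with hmdef
    have hm : 0 < m := Nat.card_pos
    have hσm : (σ : A ≃ₐ[k] A) ^ m = 1 := by
      have h1 : σ ^ m = 1 := pow_card_eq_one'
      have h2 : ((σ ^ m : ↥(ozoneGroup k A)) : A ≃ₐ[k] A) = (σ : A ≃ₐ[k] A) ^ m :=
        SubgroupClass.coe_pow σ m
      rw [h1] at h2
      exact h2.symm.trans rfl
    haveI : NeZero ((m : k)) := ⟨Nat.cast_ne_zero.mpr hm.ne'⟩
    obtain ⟨ζ, hζ⟩ := HasEnoughRootsOfUnity.exists_primitiveRoot k m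
    obtain ⟨c, hce, hcW, hcsum⟩ := single_decomp m hm ζ hζ (σ : A ≃ₐ[k] A) hσm w
    have hstab : ∀ v ∈ eigL L χ, (σ : A ≃ₐ[k] A) v ∈ eigL (k := k) L χ := by
      intro v hv τ hτ
      have hcomm := habel (τ : A ≃ₐ[k] A) τ.2 (σ : A ≃ₐ[k] A) σ.2
      calc (τ : A ≃ₐ[k] A) ((σ : A ≃ₐ[k] A) v)
          = ((τ : A ≃ₐ[k] A) * (σ : A ≃ₐ[k] A)) v := (AlgEquiv.mul_apply _ _ _).symm
        _ = ((σ : A ≃ₐ[k] A) * (τ : A ≃ₐ[k] A)) v := by rw [hcomm]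
        _ = (σ : A ≃ₐ[k] A) ((τ : A ≃ₐ[k] A) v) := AlgEquiv.mul_apply _ _ _
        _ = χ τ • (σ : A ≃ₐ[k] A) v := by rw [hv τ hτ, map_smul]
    have hcL : ∀ t, c t ∈ eigL (k := k) L χ := hcW (eigL L χ) hstab hw
    rw [hcsum]
    refine Submodule.sum_mem _ fun t _ => ?_
    refine Submodule.mem_iSup_of_mem (Function.update χ σ (ζ ^ t)) ?_
    intro τ hτ
    by_cases hts : τ = σ
    · subst hts
      rw [Function.update_self]
      exact hce t
    · have hτL : τ ∈ L := by
        rcases List.mem_cons.mp hτ with h | h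
        · exact absurd h hts
        · exact h
      rw [Function.update_of_ne hts]
      exact hcL t τ hτL

lemma diag
    (habel : ∀ σ ∈ ozoneGroup k A, ∀ τ ∈ ozoneGroup k A, σ * τ = τ * σ)
    (a : A) : a ∈ ⨆ χ : ↥(ozoneGroup k A) → k, eig χ := by
  classical
  haveI := Fintype.ofFinite ↥(ozoneGroup k A)
  set L := (Finset.univ : Finset ↥(ozoneGroup k A)).toList with hL
  have hle : (⨆ χ, eigL (k := k) (A := A) L χ) ≤ ⨆ χ, eig (k := k) (A := A) χ := by
    refine iSup_mono fun χ => ?_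
    intro w hw σ
    exact hw σ (by simp [hL, Finset.mem_toList])
  exact hle (diagL habel L a)

end Diag


section Key

variable [IsDomain A]

/-- The set of eigenvalue functions with nonzero simultaneous eigenspace, as a
submonoid of the (pointwise) monoid of functions. -/
def eigChars : Submonoid (↥(ozoneGroup k A) → k) where
  carrier := {χ | eig (k := k) (A := A) χ ≠ ⊥}
  one_mem' := by
    refine (Submodule.ne_bot_iff _).mpr ⟨1, ?_, one_ne_zero⟩
    intro σ
    rw [map_one, Pi.one_apply, one_smul]
  mul_mem' := by
    intro χ₁ χ₂ h₁ h₂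
    obtain ⟨w₁, hw₁, hw₁0⟩ := (Submodule.ne_bot_iff _).mp h₁
    obtain ⟨w₂, hw₂, hw₂0⟩ := (Submodule.ne_bot_iff _).mp h₂
    refine (Submodule.ne_bot_iff _).mpr ⟨w₁ * w₂, ?_, mul_ne_zero hw₁0 hw₂0⟩
    intro σ
    rw [map_mul, hw₁ σ, hw₂ σ, smul_mul_assoc, mul_smul_comm, smul_smul, Pi.mul_apply]

variable [IsAlgClosed k] [Finite ↥(ozoneGroup k A)]

lemma key [Fintype ↥(ozoneGroup k A)]
    (habel : ∀ σ ∈ ozoneGroup k A, ∀ τ ∈ ozoneGroup k A, σ * τ = τ * σ)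
    (g : ↥(ozoneGroup k A) → A)
    (hg : ∀ φ : ↥(ozoneGroup k A), ∀ x : A, g φ * (φ : A ≃ₐ[k] A) x = x * g φ)
    (hsum : ∑ φ : ↥(ozoneGroup k A), g φ = 0) :
    ∀ φ, g φ = 0 := by
  classical
  have hrel : ∀ χ ∈ eigChars (k := k) (A := A),
      ∑ φ : ↥(ozoneGroup k A), χ φ • g φ = 0 := by
    intro χ hχ
    obtain ⟨w, hw, hw0⟩ := (Submodule.ne_bot_iff _).mp hχ
    have h1 : (∑ φ : ↥(ozoneGroup k A), χ φ • g φ) * w = 0 := by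
      rw [Finset.sum_mul]
      have hterm : ∀ φ : ↥(ozoneGroup k A), (χ φ • g φ) * w = w * g φ := by
        intro φ
        calc (χ φ • g φ) * w = χ φ • (g φ * w) := smul_mul_assoc _ _ _
          _ = g φ * (χ φ • w) := (mul_smul_comm _ _ _).symm
          _ = g φ * ((φ : A ≃ₐ[k] A) w) := by rw [hw φ]
          _ = w * g φ := hg φ w
      rw [Finset.sum_congr rfl fun φ _ => hterm φ, ← Finset.mul_sum, hsum, mul_zero]
    rcases mul_eq_zero.mp h1 with h | h
    · exact h
    · exact absurd h hw0
  intro φ0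
  refine (Module.forall_dual_apply_eq_zero_iff k _).mp fun ℓ => ?_
  let ev : ↥(ozoneGroup k A) → (↥(eigChars (k := k) (A := A)) →* k) := fun φ =>
    { toFun := fun χ => (χ : ↥(ozoneGroup k A) → k) φ
      map_one' := rfl
      map_mul' := fun χ χ' => rfl }
  have hev : Function.Injective ev := by
    intro φ ψ h
    have hpt : ∀ χ : ↥(eigChars (k := k) (A := A)),
        (χ : ↥(ozoneGroup k A) → k) φ = (χ : ↥(ozoneGroup k A) → k) ψ :=
      fun χ => DFunLike.congr_fun h χ
    have hext : ∀ a : A, (φ : A ≃ₐ[k] A) a = (ψ : A ≃ₐ[k] A) a := by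
      intro a
      have ha := diag (k := k) (A := A) habel a
      have hle : (⨆ χ : ↥(ozoneGroup k A) → k, eig (k := k) (A := A) χ) ≤
          LinearMap.eqLocus (φ : A ≃ₐ[k] A).toLinearMap (ψ : A ≃ₐ[k] A).toLinearMap := by
        refine iSup_le fun χ => ?_
        by_cases hχ : eig (k := k) (A := A) χ = ⊥
        · rw [hχ]; exact bot_le
        · intro w hwχ
          have : (φ : A ≃ₐ[k] A) w = (ψ : A ≃ₐ[k] A) w := by
            rw [hwχ φ, hwχ ψ]
            congr 1
            exact hpt ⟨χ, hχ⟩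
          exact this
      exact hle ha
    exact Subtype.ext (AlgEquiv.ext hext)
  have hli : LinearIndependent k
      (fun φ : ↥(ozoneGroup k A) =>
        ((ev φ : ↥(eigChars (k := k) (A := A)) →* k) :
          ↥(eigChars (k := k) (A := A)) → k)) :=
    (linearIndependent_monoidHom ↥(eigChars (k := k) (A := A)) k).comp ev hev
  have hzero : ∑ φ : ↥(ozoneGroup k A),
      (ℓ (g φ)) • ((ev φ : ↥(eigChars (k := k) (A := A)) →* k) :
        ↥(eigChars (k := k) (A := A)) → k) = 0 := by
    funext χ
    have h2 := hrel χ.1 χ.2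
    have h3 : ℓ (∑ φ : ↥(ozoneGroup k A), χ.1 φ • g φ) = 0 := by rw [h2, map_zero]
    rw [map_sum] at h3
    have h4 : ∑ φ : ↥(ozoneGroup k A), χ.1 φ * ℓ (g φ) = 0 := by
      rw [← h3]
      exact Finset.sum_congr rfl fun φ _ => by rw [map_smul, smul_eq_mul]
    calc (∑ φ : ↥(ozoneGroup k A), (ℓ (g φ)) •
            ((ev φ : ↥(eigChars (k := k) (A := A)) →* k) :
              ↥(eigChars (k := k) (A := A)) → k)) χ
        = ∑ φ : ↥(ozoneGroup k A), ℓ (g φ) * χ.1 φ := by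
          rw [Finset.sum_apply]
          exact Finset.sum_congr rfl fun φ _ => rfl
      _ = ∑ φ : ↥(ozoneGroup k A), χ.1 φ * ℓ (g φ) :=
          Finset.sum_congr rfl fun φ _ => mul_comm _ _
      _ = 0 := h4
  exact Fintype.linearIndependent_iff.mp hli (fun φ => ℓ (g φ)) hzero φ0

end Key

end Stmt15Aux

/-- Suppose `k` is algebraically closed of characteristic 0. Let `A` be a
`ℤ`-graded `k`-algebra which is a domain and a finitely generated module over its center
`Z`, with finite abelian ozone group. For each `φ` in the ozone group, let `[φ]` be the
set consisting of `0` together with all normal elements `f` of `A` inducing `φ` by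
conjugation (i.e. `f·φ(x) = x·f` for all `x`). Then each `[φ]` is a `Z`-submodule of `A`
and the sum `Σ_{φ} [φ]` inside `A` is a direct sum of `Z`-modules. -/
theorem stmt15 (k A : Type*) [Field k] [CharZero k] [IsAlgClosed k]
    [Ring A] [Algebra k A] [IsDomain A]
    (𝒜 : ℤ → Submodule k A) [GradedAlgebra 𝒜]
    [Module.Finite (Subalgebra.center k A) A]
    [Finite ↥(ozoneGroup k A)]
    (habel : ∀ σ ∈ ozoneGroup k A, ∀ τ ∈ ozoneGroup k A, σ * τ = τ * σ) :
    ∃ M : ↥(ozoneGroup k A) → Submodule ↥(Subalgebra.center k A) A,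
      (∀ φ : ↥(ozoneGroup k A),
        (M φ : Set A) =
          {0} ∪ {f : A | f ≠ 0 ∧ IsNormal f ∧ ∀ x : A, f * (φ : A ≃ₐ[k] A) x = x * f}) ∧
      iSupIndep M := by
  classical
  haveI := Fintype.ofFinite ↥(ozoneGroup k A)
  refine ⟨Stmt15Aux.ozM, fun φ => Stmt15Aux.ozM_coe φ, ?_⟩
  rw [iSupIndep_iff_dfinsupp_lsum_injective]
  rw [injective_iff_map_eq_zero]
  intro v hv
  have hsum : ∑ φ : ↥(ozoneGroup k A), ((v φ : A)) = 0 := by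
    rw [DFinsupp.lsum_apply_apply, DFinsupp.sumAddHom_apply] at hv
    have h3 : ∑ φ ∈ v.support, ((v φ : A)) = 0 := hv
    rw [← h3]
    refine (Finset.sum_subset (Finset.subset_univ v.support) fun φ _ hφ => ?_).symm
    rw [DFinsupp.notMem_support_iff.mp hφ]
    rfl
  have hkey := Stmt15Aux.key habel (fun φ => (v φ : A))
    (fun φ x => (v φ).2 x) hsum
  exact DFunLike.ext v 0 fun φ => Subtype.ext (hkey φ)
end
end
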